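/- arXiv:1412.6768 — 5 statements merged into one kernel-verified Lean document; each statement's English description precedes it below -/
import Mathlib

section
/- Let N ≥ 1 and let x_0, x_1, …, x_N be distinct points on the unit circle, the boundary of the open unit disk D ⊂ ℝ². Let Ω be a nonempty open subset of ℝ² whose closure is contained in D. Then the family of functions Ω → ℝ given by x ↦ ⟨G_i(x), G_j(x)⟩, indexed by the pairs (i, j) with 1 ≤ i ≤ j ≤ N, is linearly independent over ℝ (equivalently, the family {∇u_i⁰ · ∇u_j⁰}_{1 ≤ i ≤ j ≤ N} of pointwise inner products of gradients is linearly independent as functions on Ω). (This is Proposition 4.1 of the paper, the case of the disk.) -/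
open MeasureTheory Finset

/-- The vector field `G_n(x) = (x - x_n)/‖x - x_n‖² - (x - x_0)/‖x - x_0‖²`,
where electrode `n+1` (for `n : Fin N`) is located at `x n.succ` and electrode `0` at `x 0`.
One has `G_n = -π ∇u_n⁰` for the Neumann-function differences `u_n⁰` of the unit disk. -/
noncomputable def G {N : ℕ} (x : Fin (N + 1) → EuclideanSpace ℝ (Fin 2)) (n : Fin N)
    (p : EuclideanSpace ℝ (Fin 2)) : EuclideanSpace ℝ (Fin 2) :=
  (‖p - x n.succ‖ ^ 2)⁻¹ • (p - x n.succ) - (‖p - x 0‖ ^ 2)⁻¹ • (p - x 0)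

namespace Prop41

open Complex Filter Topology Set

variable {N : ℕ}

noncomputable def gg (a : Fin (N + 1) → ℂ) (k : Fin N) (z : ℂ) : ℂ :=
  (z - a k.succ)⁻¹ - (z - a 0)⁻¹

noncomputable def gs (a : Fin (N + 1) → ℂ) (k : Fin N) (w : ℂ) : ℂ :=
  (w - (starRingEnd ℂ) (a k.succ))⁻¹ - (w - (starRingEnd ℂ) (a 0))⁻¹

lemma gs_conj (a : Fin (N + 1) → ℂ) (k : Fin N) (z : ℂ) :
    gs a k ((starRingEnd ℂ) z) = (starRingEnd ℂ) (gg a k z) := by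
  simp [gg, gs, map_sub, map_inv₀]

lemma inv_conj_eq (c : ℂ) : ((starRingEnd ℂ) c)⁻¹ = (‖c‖ ^ 2)⁻¹ • c := by
  rcases eq_or_ne c 0 with rfl | hc
  · simp
  · rw [Complex.real_smul, eq_comm]
    apply eq_inv_of_mul_eq_one_left
    rw [mul_assoc, Complex.mul_conj']
    norm_cast
    rw [inv_mul_cancel₀]
    exact pow_ne_zero 2 (norm_ne_zero_iff.2 hc)

lemma analyticAt_gg {a : Fin (N + 1) → ℂ} {k : Fin N} {z : ℂ}
    (h1 : z ≠ a k.succ) (h0 : z ≠ a 0) : AnalyticAt ℂ (gg a k) z := by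
  apply AnalyticAt.sub
  · exact ((analyticAt_id.sub analyticAt_const).inv (sub_ne_zero.2 h1))
  · exact ((analyticAt_id.sub analyticAt_const).inv (sub_ne_zero.2 h0))

lemma analyticAt_gs {a : Fin (N + 1) → ℂ} {k : Fin N} {w : ℂ}
    (h1 : w ≠ (starRingEnd ℂ) (a k.succ)) (h0 : w ≠ (starRingEnd ℂ) (a 0)) :
    AnalyticAt ℂ (gs a k) w := by
  apply AnalyticAt.sub
  · exact ((analyticAt_id.sub analyticAt_const).inv (sub_ne_zero.2 h1))
  · exact ((analyticAt_id.sub analyticAt_const).inv (sub_ne_zero.2 h0))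

noncomputable def FF (a : Fin (N + 1) → ℂ) (α : Fin N → Fin N → ℝ) (z : ℂ) : ℝ :=
  ∑ j : Fin N, ∑ i ∈ Finset.univ.filter (fun i : Fin N => i ≤ j),
    α i j * (gg a i z * (starRingEnd ℂ) (gg a j z)).re

noncomputable def HH (a : Fin (N + 1) → ℂ) (α : Fin N → Fin N → ℝ) (z w : ℂ) : ℂ :=
  ∑ j : Fin N, ∑ i ∈ Finset.univ.filter (fun i : Fin N => i ≤ j),
    (α i j : ℂ) * (gg a i z * gs a j w + gg a j z * gs a i w)

lemma HH_diag (a : Fin (N + 1) → ℂ) (α : Fin N → Fin N → ℝ) (z : ℂ) :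
    HH a α z ((starRingEnd ℂ) z) = ((2 * FF a α z : ℝ) : ℂ) := by
  rw [HH, FF]
  push_cast
  rw [Finset.mul_sum]
  refine Finset.sum_congr rfl fun j _ => ?_
  rw [Finset.mul_sum]
  refine Finset.sum_congr rfl fun i _ => ?_
  rw [gs_conj, gs_conj]
  have h : gg a i z * (starRingEnd ℂ) (gg a j z) + gg a j z * (starRingEnd ℂ) (gg a i z)
      = ((2 * (gg a i z * (starRingEnd ℂ) (gg a j z)).re : ℝ) : ℂ) := by
    rw [← Complex.add_conj, map_mul, Complex.conj_conj]
    ring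
  rw [h]
  push_cast
  ring

lemma analyticAt_FF {a : Fin (N + 1) → ℂ} {α : Fin N → Fin N → ℝ} {z : ℂ}
    (hz : ∀ k, z ≠ a k) : AnalyticAt ℝ (FF a α) z := by
  have key : ∀ k : Fin N, AnalyticAt ℝ (gg a k) z :=
    fun k => (analyticAt_gg (hz _) (hz _)).restrictScalars
  unfold FF
  apply Finset.analyticAt_fun_sum _ (fun j _ => ?_)
  apply Finset.analyticAt_fun_sum _ (fun i _ => ?_)
  apply analyticAt_const.mul
  have h2 : AnalyticAt ℝ (fun x => (starRingEnd ℂ) (gg a j x)) z :=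
    (Complex.conjCLE.toContinuousLinearMap.analyticAt _).comp (key j)
  have h3 : AnalyticAt ℝ (fun x => gg a i x * (starRingEnd ℂ) (gg a j x)) z := (key i).mul h2
  exact (Complex.reCLM.analyticAt _).comp h3

lemma preconn_compl_finite {s : Set ℂ} (hs : s.Finite) : IsPreconnected sᶜ :=
  ((hs.countable.isPathConnected_compl_of_one_lt_rank
    (by rw [rank_real_complex]; exact Nat.one_lt_ofNat)).isConnected).isPreconnected

/-- Generic one-variable identity-theorem step. -/
lemma slice_eqOn_zero {B : Set ℂ} (hB : B.Finite) {φ : ℂ → ℂ}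
    (hφ : ∀ s ∉ B, AnalyticAt ℂ φ s)
    (h0 : ∀ r : ℝ, (r : ℂ) ∉ B → φ r = 0) :
    ∀ s ∉ B, φ s = 0 := by
  obtain ⟨R, hR⟩ : ∃ R : ℝ, ∀ z ∈ B, ‖z‖ ≤ R := by
    obtain ⟨R, hR⟩ := (hB.image norm).bddAbove
    exact ⟨R, fun z hz => hR (Set.mem_image_of_mem _ hz)⟩
  have hnot : ∀ x : ℝ, R < x → (x : ℂ) ∉ B := by
    intro x hx hmem
    have := hR _ hmem
    rw [Complex.norm_real, Real.norm_eq_abs] at this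
    have := le_abs_self x
    linarith
  set t₀ : ℂ := ((R + 1 : ℝ) : ℂ) with ht₀
  have ht₀B : t₀ ∉ B := hnot _ (by linarith)
  have hfreq : ∃ᶠ z in 𝓝[≠] t₀, φ z = 0 := by
    set u : ℕ → ℂ := fun n => ((R + 1 + 1 / (n + 1) : ℝ) : ℂ) with hu
    have hpos : ∀ n : ℕ, (0:ℝ) < 1 / (n + 1) := fun n => by positivity
    have htend : Tendsto u atTop (𝓝[≠] t₀) := by
      apply tendsto_nhdsWithin_of_tendsto_nhds_of_eventually_within
      · have hr : Tendsto (fun n : ℕ => R + 1 + 1 / (n + 1 : ℝ)) atTop (𝓝 (R + 1)) := by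
          have h1 : Tendsto (fun n : ℕ => 1 / (n + 1 : ℝ)) atTop (𝓝 0) :=
            tendsto_one_div_add_atTop_nhds_zero_nat
          simpa using tendsto_const_nhds.add h1
        exact (Complex.continuous_ofReal.tendsto _).comp hr
      · refine Filter.Eventually.of_forall fun n => ?_
        simp only [Set.mem_compl_iff, Set.mem_singleton_iff, hu, ht₀]
        intro h
        have := Complex.ofReal_inj.1 h
        have := hpos n
        linarith
    refine htend.frequently (Filter.Frequently.of_forall fun n => ?_)
    exact h0 _ (hnot _ (by have := hpos n; linarith))
  intro s hs
  have hAO : AnalyticOnNhd ℂ φ Bᶜ := fun z hz => hφ z hz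
  exact hAO.eqOn_zero_of_preconnected_of_frequently_eq_zero
    (preconn_compl_finite hB) ht₀B hfreq hs

lemma bad_finite (a : Fin (N + 1) → ℂ) (c d c' d' : ℂ) (hd : d ≠ 0) (hd' : d' ≠ 0) :
    {s : ℂ | ∃ k, c + d * s = a k ∨ c' + d' * s = (starRingEnd ℂ) (a k)}.Finite := by
  apply Set.Finite.subset ((Set.finite_range (fun k => (a k - c) / d)).union
    (Set.finite_range (fun k => ((starRingEnd ℂ) (a k) - c') / d')))
  rintro s ⟨k, hk | hk⟩
  · left
    exact ⟨k, by rw [div_eq_iff hd]; linear_combination -hk⟩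
  · right
    exact ⟨k, by rw [div_eq_iff hd']; linear_combination -hk⟩

lemma analyticAt_HH_slice {a : Fin (N + 1) → ℂ} {α : Fin N → Fin N → ℝ}
    (c d c' d' : ℂ) {s : ℂ}
    (h1 : ∀ k, c + d * s ≠ a k) (h2 : ∀ k, c' + d' * s ≠ (starRingEnd ℂ) (a k)) :
    AnalyticAt ℂ (fun s => HH a α (c + d * s) (c' + d' * s)) s := by
  have haff : AnalyticAt ℂ (fun s : ℂ => c + d * s) s :=
    analyticAt_const.add (analyticAt_const.mul analyticAt_id)
  have haff' : AnalyticAt ℂ (fun s : ℂ => c' + d' * s) s :=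
    analyticAt_const.add (analyticAt_const.mul analyticAt_id)
  unfold HH
  apply Finset.analyticAt_fun_sum _ (fun j _ => ?_)
  apply Finset.analyticAt_fun_sum _ (fun i _ => ?_)
  apply analyticAt_const.mul
  have hgg : ∀ i : Fin N, AnalyticAt ℂ (fun s : ℂ => gg a i (c + d * s)) s := fun i =>
    AnalyticAt.comp (g := gg a i) (f := fun s : ℂ => c + d * s)
      (analyticAt_gg (h1 _) (h1 _)) haff
  have hgs : ∀ i : Fin N, AnalyticAt ℂ (fun s : ℂ => gs a i (c' + d' * s)) s := fun i =>
    AnalyticAt.comp (g := gs a i) (f := fun s : ℂ => c' + d' * s)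
      (analyticAt_gs (h2 _) (h2 _)) haff'
  exact ((hgg i).mul (hgs j)).add ((hgg j).mul (hgs i))

lemma claim1 {a : Fin (N + 1) → ℂ} {α : Fin N → Fin N → ℝ}
    (h0 : ∀ z, (∀ k, z ≠ a k) → HH a α z ((starRingEnd ℂ) z) = 0)
    (y : ℝ) (t : ℂ) (h1 : ∀ k, t + (y : ℂ) * I ≠ a k)
    (h2 : ∀ k, t - (y : ℂ) * I ≠ (starRingEnd ℂ) (a k)) :
    HH a α (t + (y : ℂ) * I) (t - (y : ℂ) * I) = 0 := by
  set c : ℂ := (y : ℂ) * I with hc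
  set c' : ℂ := -((y : ℂ) * I) with hc'
  have hB := bad_finite a c 1 c' 1 one_ne_zero one_ne_zero
  have hφ : ∀ s ∉ {s : ℂ | ∃ k, c + 1 * s = a k ∨ c' + 1 * s = (starRingEnd ℂ) (a k)},
      AnalyticAt ℂ (fun s => HH a α (c + 1 * s) (c' + 1 * s)) s := by
    intro s hs
    simp only [Set.mem_setOf_eq, not_exists, not_or] at hs
    exact analyticAt_HH_slice c 1 c' 1 (fun k => (hs k).1) (fun k => (hs k).2)
  have hz : ∀ r : ℝ, (r : ℂ) ∉ {s : ℂ | ∃ k, c + 1 * s = a k ∨ c' + 1 * s = (starRingEnd ℂ) (a k)} →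
      HH a α (c + 1 * (r : ℂ)) (c' + 1 * (r : ℂ)) = 0 := by
    intro r hr
    simp only [Set.mem_setOf_eq, not_exists, not_or] at hr
    have hconj : (starRingEnd ℂ) (c + 1 * (r : ℂ)) = c' + 1 * (r : ℂ) := by
      simp only [hc, hc', map_add, map_mul, map_one, Complex.conj_I, Complex.conj_ofReal]
      ring
    rw [show c' + 1 * (r : ℂ) = (starRingEnd ℂ) (c + 1 * (r : ℂ)) from hconj.symm]
    exact h0 _ (fun k => (hr k).1)
  have := slice_eqOn_zero hB hφ hz t (by
    simp only [Set.mem_setOf_eq, not_exists, not_or]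
    intro k
    constructor
    · rw [show c + 1 * t = t + (y : ℂ) * I from by rw [hc]; ring]; exact h1 k
    · rw [show c' + 1 * t = t - (y : ℂ) * I from by rw [hc']; ring]; exact h2 k)
  rw [show t + (y : ℂ) * I = c + 1 * t from by rw [hc]; ring,
    show t - (y : ℂ) * I = c' + 1 * t from by rw [hc']; ring]
  exact this

lemma claim2 {a : Fin (N + 1) → ℂ} {α : Fin N → Fin N → ℝ}
    (h0 : ∀ z, (∀ k, z ≠ a k) → HH a α z ((starRingEnd ℂ) z) = 0)
    (z w : ℂ) (hz : ∀ k, z ≠ a k) (hw : ∀ k, w ≠ (starRingEnd ℂ) (a k)) :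
    HH a α z w = 0 := by
  set t : ℂ := (z + w) / 2 with ht
  have hB := bad_finite a t I t (-I) Complex.I_ne_zero (neg_ne_zero.2 Complex.I_ne_zero)
  have hφ : ∀ s ∉ {s : ℂ | ∃ k, t + I * s = a k ∨ t + -I * s = (starRingEnd ℂ) (a k)},
      AnalyticAt ℂ (fun s => HH a α (t + I * s) (t + -I * s)) s := by
    intro s hs
    simp only [Set.mem_setOf_eq, not_exists, not_or] at hs
    exact analyticAt_HH_slice t I t (-I) (fun k => (hs k).1) (fun k => (hs k).2)
  have hzero : ∀ r : ℝ,
      (r : ℂ) ∉ {s : ℂ | ∃ k, t + I * s = a k ∨ t + -I * s = (starRingEnd ℂ) (a k)} →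
      HH a α (t + I * (r : ℂ)) (t + -I * (r : ℂ)) = 0 := by
    intro r hr
    simp only [Set.mem_setOf_eq, not_exists, not_or] at hr
    have := claim1 h0 r t
      (fun k => by rw [show t + (r : ℂ) * I = t + I * (r : ℂ) from by ring]; exact (hr k).1)
      (fun k => by rw [show t - (r : ℂ) * I = t + -I * (r : ℂ) from by ring]; exact (hr k).2)
    rw [show t + I * (r : ℂ) = t + (r : ℂ) * I from by ring,
      show t + -I * (r : ℂ) = t - (r : ℂ) * I from by ring]
    exact this
  set s₁ : ℂ := (z - w) / (2 * I) with hs₁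
  have e1 : t + I * s₁ = z := by
    rw [ht, hs₁]
    field_simp
    ring
  have e2 : t + -I * s₁ = w := by
    rw [ht, hs₁]
    field_simp
    ring
  have hs₁B : s₁ ∉ {s : ℂ | ∃ k, t + I * s = a k ∨ t + -I * s = (starRingEnd ℂ) (a k)} := by
    simp only [Set.mem_setOf_eq, not_exists, not_or]
    intro k
    rw [e1, e2]
    exact ⟨hz k, hw k⟩
  have := slice_eqOn_zero hB hφ hzero s₁ hs₁B
  rw [e1, e2] at this
  exact this

lemma eventually_ne_finite (b : Fin (N + 1) → ℂ) (A : ℂ) :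
    ∀ᶠ z in 𝓝[≠] A, ∀ k, z ≠ b k := by
  refine Filter.eventually_all.2 fun k => ?_
  rcases eq_or_ne (b k) A with rfl | hk
  · exact eventually_mem_nhdsWithin
  · exact eventually_nhdsWithin_of_eventually_nhds (isOpen_ne.eventually_mem hk.symm)

lemma tendsto_sub_self (A : ℂ) : Tendsto (fun z : ℂ => z - A) (𝓝[≠] A) (𝓝 0) := by
  have h : Tendsto (fun z : ℂ => z - A) (𝓝 A) (𝓝 (A - A)) :=
    (continuous_id.sub continuous_const).tendsto A
  rw [sub_self] at h
  exact h.mono_left nhdsWithin_le_nhds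

lemma tendsto_pole_self {c A : ℂ} (hc : A ≠ c) :
    Tendsto (fun z : ℂ => (z - A) * ((z - A)⁻¹ - (z - c)⁻¹)) (𝓝[≠] A) (𝓝 1) := by
  have hcont : Tendsto (fun z : ℂ => (z - c)⁻¹) (𝓝[≠] A) (𝓝 ((A - c)⁻¹)) :=
    (((continuous_id.sub continuous_const).tendsto A).inv₀ (sub_ne_zero.2 hc)).mono_left
      (nhdsWithin_le_nhds (s := {A}ᶜ))
  have main : Tendsto (fun z : ℂ => 1 - (z - A) * (z - c)⁻¹) (𝓝[≠] A)
      (𝓝 (1 - 0 * (A - c)⁻¹)) := tendsto_const_nhds.sub ((tendsto_sub_self A).mul hcont)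
  rw [zero_mul, sub_zero] at main
  apply main.congr'
  filter_upwards [eventually_mem_nhdsWithin] with z hz
  have hzA : z - A ≠ 0 := sub_ne_zero.2 hz
  rw [mul_sub, mul_inv_cancel₀ hzA]

lemma tendsto_pole_other {b c A : ℂ} (hb : A ≠ b) (hc : A ≠ c) :
    Tendsto (fun z : ℂ => (z - A) * ((z - b)⁻¹ - (z - c)⁻¹)) (𝓝[≠] A) (𝓝 0) := by
  have hcont : Tendsto (fun z : ℂ => (z - b)⁻¹ - (z - c)⁻¹) (𝓝[≠] A)
      (𝓝 ((A - b)⁻¹ - (A - c)⁻¹)) := by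
    apply Tendsto.sub
    · exact (((continuous_id.sub continuous_const).tendsto A).inv₀
        (sub_ne_zero.2 hb)).mono_left (nhdsWithin_le_nhds (s := {A}ᶜ))
    · exact (((continuous_id.sub continuous_const).tendsto A).inv₀
        (sub_ne_zero.2 hc)).mono_left (nhdsWithin_le_nhds (s := {A}ᶜ))
  have := (tendsto_sub_self A).mul hcont
  rw [zero_mul] at this
  exact this

lemma key_gg {a : Fin (N + 1) → ℂ} (ha : Function.Injective a) (m i : Fin N) :
    Tendsto (fun z => (z - a m.succ) * gg a i z) (𝓝[≠] (a m.succ))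
      (𝓝 (if i = m then 1 else 0)) := by
  rcases eq_or_ne i m with rfl | him
  · have hc : a i.succ ≠ a 0 := fun h => (Fin.succ_ne_zero i) (ha h)
    simpa [gg] using tendsto_pole_self hc
  · have hb : a m.succ ≠ a i.succ := fun h => him (Fin.succ_injective _ (ha h)).symm
    have hc : a m.succ ≠ a 0 := fun h => Fin.succ_ne_zero m (ha h)
    simpa [gg, him] using tendsto_pole_other hb hc

lemma key_gs {a : Fin (N + 1) → ℂ} (ha : Function.Injective a) (n j : Fin N) :
    Tendsto (fun w => (w - (starRingEnd ℂ) (a n.succ)) * gs a j w)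
      (𝓝[≠] ((starRingEnd ℂ) (a n.succ))) (𝓝 (if j = n then 1 else 0)) := by
  have hconj : Function.Injective ((starRingEnd ℂ) ∘ a) :=
    fun k l h => ha ((starRingEnd ℂ).injective h)
  rcases eq_or_ne j n with rfl | hjn
  · have hc : (starRingEnd ℂ) (a j.succ) ≠ (starRingEnd ℂ) (a 0) :=
      fun h => (Fin.succ_ne_zero j) (hconj h)
    simpa [gs] using tendsto_pole_self hc
  · have hb : (starRingEnd ℂ) (a n.succ) ≠ (starRingEnd ℂ) (a j.succ) :=
      fun h => hjn (Fin.succ_injective _ (hconj h)).symm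
    have hc : (starRingEnd ℂ) (a n.succ) ≠ (starRingEnd ℂ) (a 0) :=
      fun h => Fin.succ_ne_zero n (hconj h)
    simpa [gs, hjn] using tendsto_pole_other hb hc

noncomputable def RS (a : Fin (N + 1) → ℂ) (α : Fin N → Fin N → ℝ) (m : Fin N) (w : ℂ) : ℂ :=
  ∑ j : Fin N, ∑ i ∈ Finset.univ.filter (fun i : Fin N => i ≤ j),
    (α i j : ℂ) * ((if i = m then (1 : ℂ) else 0) * gs a j w
      + (if j = m then (1 : ℂ) else 0) * gs a i w)

lemma RS_zero {a : Fin (N + 1) → ℂ} {α : Fin N → Fin N → ℝ} (ha : Function.Injective a)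
    (hHH : ∀ z w, (∀ k, z ≠ a k) → (∀ k, w ≠ (starRingEnd ℂ) (a k)) → HH a α z w = 0)
    (m : Fin N) (w : ℂ) (hw : ∀ k, w ≠ (starRingEnd ℂ) (a k)) :
    RS a α m w = 0 := by
  set A := a m.succ with hA
  have t1 : Tendsto (fun z => (z - A) * HH a α z w) (𝓝[≠] A) (𝓝 (RS a α m w)) := by
    have hfun : (fun z => (z - A) * HH a α z w)
        = fun z => ∑ j : Fin N, ∑ i ∈ Finset.univ.filter (fun i : Fin N => i ≤ j),
            (α i j : ℂ) * (((z - A) * gg a i z) * gs a j w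
              + ((z - A) * gg a j z) * gs a i w) := by
      funext z
      rw [HH, Finset.mul_sum]
      refine Finset.sum_congr rfl fun j _ => ?_
      rw [Finset.mul_sum]
      exact Finset.sum_congr rfl fun i _ => by ring
    rw [hfun, RS]
    apply tendsto_finset_sum _ fun j _ => ?_
    apply tendsto_finset_sum _ fun i _ => ?_
    exact (((key_gg ha m i).mul_const _).add ((key_gg ha m j).mul_const _)).const_mul _
  have t2 : Tendsto (fun z => (z - A) * HH a α z w) (𝓝[≠] A) (𝓝 0) := by
    apply Filter.Tendsto.congr' _ tendsto_const_nhds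
    filter_upwards [eventually_ne_finite a A] with z hz
    rw [hHH z w hz hw, mul_zero]
  exact tendsto_nhds_unique t1 t2

lemma SS_zero {a : Fin (N + 1) → ℂ} {α : Fin N → Fin N → ℝ} (ha : Function.Injective a)
    (hRS : ∀ (m : Fin N) (w : ℂ), (∀ k, w ≠ (starRingEnd ℂ) (a k)) → RS a α m w = 0)
    (m n : Fin N) :
    ∑ j : Fin N, ∑ i ∈ Finset.univ.filter (fun i : Fin N => i ≤ j),
      (α i j : ℂ) * ((if i = m then (1 : ℂ) else 0) * (if j = n then (1 : ℂ) else 0)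
        + (if j = m then (1 : ℂ) else 0) * (if i = n then (1 : ℂ) else 0)) = 0 := by
  set B := (starRingEnd ℂ) (a n.succ) with hB
  have t1 : Tendsto (fun w => (w - B) * RS a α m w) (𝓝[≠] B)
      (𝓝 (∑ j : Fin N, ∑ i ∈ Finset.univ.filter (fun i : Fin N => i ≤ j),
        (α i j : ℂ) * ((if i = m then (1 : ℂ) else 0) * (if j = n then (1 : ℂ) else 0)
          + (if j = m then (1 : ℂ) else 0) * (if i = n then (1 : ℂ) else 0)))) := by
    have hfun : (fun w => (w - B) * RS a α m w)
        = fun w => ∑ j : Fin N, ∑ i ∈ Finset.univ.filter (fun i : Fin N => i ≤ j),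
            (α i j : ℂ) * ((if i = m then (1 : ℂ) else 0) * ((w - B) * gs a j w)
              + (if j = m then (1 : ℂ) else 0) * ((w - B) * gs a i w)) := by
      funext w
      rw [RS, Finset.mul_sum]
      refine Finset.sum_congr rfl fun j _ => ?_
      rw [Finset.mul_sum]
      exact Finset.sum_congr rfl fun i _ => by ring
    rw [hfun]
    apply tendsto_finset_sum _ fun j _ => ?_
    apply tendsto_finset_sum _ fun i _ => ?_
    exact (((key_gs ha n j).const_mul _).add ((key_gs ha n i).const_mul _)).const_mul _
  have t2 : Tendsto (fun w => (w - B) * RS a α m w) (𝓝[≠] B) (𝓝 0) := by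
    apply Filter.Tendsto.congr' _ tendsto_const_nhds
    filter_upwards [eventually_ne_finite (fun k => (starRingEnd ℂ) (a k)) B] with w hw
    rw [hRS m w hw, mul_zero]
  exact tendsto_nhds_unique t1 t2

lemma alpha_zero {α : Fin N → Fin N → ℝ}
    (hSS : ∀ m n : Fin N,
      ∑ j : Fin N, ∑ i ∈ Finset.univ.filter (fun i : Fin N => i ≤ j),
        (α i j : ℂ) * ((if i = m then (1 : ℂ) else 0) * (if j = n then (1 : ℂ) else 0)
          + (if j = m then (1 : ℂ) else 0) * (if i = n then (1 : ℂ) else 0)) = 0)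
    (m n : Fin N) (hmn : m ≤ n) : α m n = 0 := by
  have h := hSS m n
  have hout : ∀ j ∈ Finset.univ, j ≠ n →
      (∑ i ∈ Finset.univ.filter (fun i : Fin N => i ≤ j),
        (α i j : ℂ) * ((if i = m then (1 : ℂ) else 0) * (if j = n then (1 : ℂ) else 0)
          + (if j = m then (1 : ℂ) else 0) * (if i = n then (1 : ℂ) else 0))) = 0 := by
    intro j _ hjn
    apply Finset.sum_eq_zero
    intro i hi
    rw [if_neg hjn, mul_zero, zero_add]
    by_cases hjm : j = m
    · by_cases hin : i = n
      · have hij : i ≤ j := (Finset.mem_filter.1 hi).2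
        rw [hin, hjm] at hij
        exact absurd (hjm.trans (le_antisymm hmn hij)) hjn
      · rw [if_neg hin, mul_zero, mul_zero]
    · rw [if_neg hjm, zero_mul, mul_zero]
  rw [Finset.sum_eq_single_of_mem n (Finset.mem_univ n) hout] at h
  have hin' : ∀ i ∈ Finset.univ.filter (fun i : Fin N => i ≤ n), i ≠ m →
      (α i n : ℂ) * ((if i = m then (1 : ℂ) else 0) * (if n = n then (1 : ℂ) else 0)
        + (if n = m then (1 : ℂ) else 0) * (if i = n then (1 : ℂ) else 0)) = 0 := by
    intro i _ him
    rw [if_neg him, zero_mul, zero_add]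
    by_cases hnm : n = m
    · have hin2 : i ≠ n := fun hh => him (hh.trans hnm)
      rw [if_neg hin2, mul_zero, mul_zero]
    · rw [if_neg hnm, zero_mul, mul_zero]
  have hmem : m ∈ Finset.univ.filter (fun i : Fin N => i ≤ n) :=
    Finset.mem_filter.2 ⟨Finset.mem_univ m, hmn⟩
  rw [Finset.sum_eq_single_of_mem m hmem hin', if_pos rfl, if_pos rfl] at h
  have hfac : ((1 : ℂ) * 1 + (if n = m then (1 : ℂ) else 0)
      * (if m = n then (1 : ℂ) else 0)) ≠ 0 := by
    by_cases hmn' : m = n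
    · rw [if_pos hmn'.symm, if_pos hmn']; norm_num
    · rw [if_neg (Ne.symm hmn'), zero_mul]; norm_num
  rcases mul_eq_zero.1 h with h' | h'
  · exact_mod_cast h'
  · exact absurd h' hfac

end Prop41

open Prop41 in
/-- Proposition 4.1: for distinct point electrodes on the unit circle and any nonempty
open `Ω` compactly contained in the unit disk, the family
`{∇u_i⁰ · ∇u_j⁰}_{1 ≤ i ≤ j ≤ N} = {(1/π²)⟨G_i, G_j⟩}_{1 ≤ i ≤ j ≤ N}`
is linearly independent as functions on `Ω`. -/
theorem linear_independence_gradient_products_disk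
    (N : ℕ) (hN : 1 ≤ N)
    (x : Fin (N + 1) → EuclideanSpace ℝ (Fin 2))
    (hx : Function.Injective x)
    (hcirc : ∀ n, ‖x n‖ = 1)
    (Ω : Set (EuclideanSpace ℝ (Fin 2)))
    (hΩopen : IsOpen Ω) (hΩne : Ω.Nonempty)
    (hΩD : closure Ω ⊆ Metric.ball (0 : EuclideanSpace ℝ (Fin 2)) 1)
    (α : Fin N → Fin N → ℝ)
    (hα : ∀ p ∈ Ω,
      ∑ j : Fin N, ∑ i ∈ Finset.univ.filter (fun i : Fin N => i ≤ j),
        α i j * (inner ℝ (G x i p) (G x j p) : ℝ) = 0) :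
    ∀ i j : Fin N, i ≤ j → α i j = 0 := by
  classical
  set e := Complex.orthonormalBasisOneI.repr with he
  set a : Fin (N + 1) → ℂ := fun k => e.symm (x k) with haa
  have ha : Function.Injective a := by
    intro k l h
    apply hx
    have h2 := congrArg e h
    rw [haa] at h2
    simpa using h2
  have hn : ∀ (p : EuclideanSpace ℝ (Fin 2)) (k : Fin (N + 1)),
      ‖p - x k‖ = ‖e.symm p - a k‖ := by
    intro p k
    rw [haa, ← map_sub, LinearIsometryEquiv.norm_map]
  have hGin : ∀ (i : Fin N) (p : EuclideanSpace ℝ (Fin 2)),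
      e.symm (G x i p) = (starRingEnd ℂ) (gg a i (e.symm p)) := by
    intro i p
    have hr : ∀ (z b : ℂ), (starRingEnd ℂ) ((z - b)⁻¹) = (‖z - b‖ ^ 2)⁻¹ • (z - b) :=
      fun z b => by rw [map_inv₀, inv_conj_eq]
    rw [gg, map_sub, hr, hr]
    simp only [G, map_sub, _root_.map_smul, hn, haa]
  have hInner : ∀ (i j : Fin N) (p : EuclideanSpace ℝ (Fin 2)),
      (inner ℝ (G x i p) (G x j p) : ℝ)
        = (gg a i (e.symm p) * (starRingEnd ℂ) (gg a j (e.symm p))).re := by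
    intro i j p
    rw [← LinearIsometryEquiv.inner_map_map e.symm (G x i p) (G x j p), hGin, hGin,
      Complex.inner, Complex.conj_conj, mul_comm]
  have hFΩ : ∀ z : ℂ, e z ∈ Ω → FF a α z = 0 := by
    intro z hz
    have hh := hα (e z) hz
    rw [FF, ← hh]
    refine Finset.sum_congr rfl fun j _ => Finset.sum_congr rfl fun i _ => ?_
    rw [hInner i j (e z), LinearIsometryEquiv.symm_apply_apply]
  have hΩ'open : IsOpen (e ⁻¹' Ω) := hΩopen.preimage e.continuous
  obtain ⟨p₀, hp₀⟩ := hΩne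
  have hz₀ : e.symm p₀ ∈ e ⁻¹' Ω := by
    simp only [Set.mem_preimage, LinearIsometryEquiv.apply_symm_apply]
    exact hp₀
  have hsub : (e ⁻¹' Ω) ⊆ (Set.range a)ᶜ := by
    intro z hz hmem
    obtain ⟨k, hk⟩ := hmem
    have h1 : ‖z‖ < 1 := by
      have hb : e z ∈ Metric.ball (0 : EuclideanSpace ℝ (Fin 2)) 1 := hΩD (subset_closure hz)
      rw [mem_ball_zero_iff] at hb
      calc ‖z‖ = ‖e z‖ := (e.norm_map z).symm
        _ < 1 := hb
    have h2 : ‖a k‖ = 1 := by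
      rw [haa]
      calc ‖e.symm (x k)‖ = ‖x k‖ := e.symm.norm_map (x k)
        _ = 1 := hcirc k
    rw [← hk, h2] at h1
    exact lt_irrefl _ h1
  have hU : IsPreconnected ((Set.range a)ᶜ) := preconn_compl_finite (Set.finite_range a)
  have hAnal : AnalyticOnNhd ℝ (FF a α) ((Set.range a)ᶜ) := fun z hz =>
    analyticAt_FF (fun k hzk => hz ⟨k, hzk.symm⟩)
  have hev : FF a α =ᶠ[nhds (e.symm p₀)] 0 :=
    Filter.eventually_of_mem (hΩ'open.mem_nhds hz₀) (fun z hz => hFΩ z hz)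
  have hFF0 : Set.EqOn (FF a α) 0 ((Set.range a)ᶜ) :=
    hAnal.eqOn_zero_of_preconnected_of_eventuallyEq_zero hU (hsub hz₀) hev
  have h0 : ∀ z, (∀ k, z ≠ a k) → HH a α z ((starRingEnd ℂ) z) = 0 := by
    intro z hz
    rw [HH_diag]
    have hz' : FF a α z = 0 := hFF0 (fun hmem => by
      obtain ⟨k, hk⟩ := hmem
      exact hz k hk.symm)
    rw [hz']
    simp
  have hHH : ∀ z w, (∀ k, z ≠ a k) → (∀ k, w ≠ (starRingEnd ℂ) (a k)) → HH a α z w = 0 :=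
    fun z w hz hw => claim2 h0 z w hz hw
  have hRS : ∀ (m : Fin N) (w : ℂ), (∀ k, w ≠ (starRingEnd ℂ) (a k)) → RS a α m w = 0 :=
    fun m w hw => RS_zero ha hHH m w hw
  have hSS := SS_zero ha hRS
  intro i j hij
  exact alpha_zero hSS i j hij
end

section
/- Let N ≥ 1, let x_0, x_1, …, x_N be distinct points on the unit circle (the boundary of the open unit disk D ⊂ ℝ²), and let Ω be a nonempty open subset of ℝ² whose closure is contained in D. Then there exist bounded Lebesgue-measurable functions κ_{ij} : ℝ² → ℝ, indexed by pairs (i, j) with 1 ≤ i ≤ j ≤ N, each vanishing at every point outside the closure of Ω, such that for all pairs (i', j') with 1 ≤ i' ≤ j' ≤ N one has ∫_{ℝ²} κ_{ij}(x) · (1/π²) ⟨G_{i'}(x), G_{j'}(x)⟩ dx = 1 if (i, j) = (i', j') and = 0 otherwise. (This combines Lemma 3.4 and Proposition 4.1 of the paper: existence of the biorthogonal conductivity perturbation shape functions κ_{ij} satisfying conditions (3.8) for the unit disk.) -/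
open MeasureTheory Finset

namespace BiorthAux
open Complex
variable {N : ℕ}

noncomputable def gg (α : Fin (N + 1) → ℂ) (n : Fin N) (z : ℂ) : ℂ :=
  (z - α n.succ)⁻¹ - (z - α 0)⁻¹

lemma conj_gg (α : Fin (N + 1) → ℂ) (n : Fin N) (z : ℂ) :
    gg (fun k => (starRingEnd ℂ) (α k)) n ((starRingEnd ℂ) z) = (starRingEnd ℂ) (gg α n z) := by
  simp [gg, map_sub, map_inv₀]

end BiorthAux

namespace BiorthAux
variable {N : ℕ}

lemma analyticAt_gg_fst {α : Fin (N + 1) → ℂ} {p : ℂ × ℂ} (hp : p.1 ∉ Set.range α) (n : Fin N) :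
    AnalyticAt ℂ (fun q : ℂ × ℂ => gg α n q.1) p := by
  have h1 : p.1 - α n.succ ≠ 0 := sub_ne_zero.mpr (fun h => hp ⟨n.succ, h.symm⟩)
  have h0 : p.1 - α 0 ≠ 0 := sub_ne_zero.mpr (fun h => hp ⟨0, h.symm⟩)
  exact ((analyticAt_fst.sub analyticAt_const).inv h1).sub
    ((analyticAt_fst.sub analyticAt_const).inv h0)

lemma analyticAt_gg_snd {α : Fin (N + 1) → ℂ} {p : ℂ × ℂ} (hp : p.2 ∉ Set.range α) (n : Fin N) :
    AnalyticAt ℂ (fun q : ℂ × ℂ => gg α n q.2) p := by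
  have h1 : p.2 - α n.succ ≠ 0 := sub_ne_zero.mpr (fun h => hp ⟨n.succ, h.symm⟩)
  have h0 : p.2 - α 0 ≠ 0 := sub_ne_zero.mpr (fun h => hp ⟨0, h.symm⟩)
  exact ((analyticAt_snd.sub analyticAt_const).inv h1).sub
    ((analyticAt_snd.sub analyticAt_const).inv h0)

/-- linear independence of the `gg α n` as functions on the complement of the poles -/
lemma indep (α : Fin (N + 1) → ℂ) (hα : Function.Injective α) (c : Fin N → ℂ)
    (h : ∀ z, z ∉ Set.range α → ∑ n, c n * gg α n z = 0) : c = 0 := by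
  funext i
  set a : ℂ := α i.succ with ha
  -- eventually in punctured nbhd of a, z avoids all poles
  have hev : ∀ᶠ z in nhdsWithin a {a}ᶜ, z ∉ Set.range α := by
    have hcl : IsClosed (Set.range α \ {a}) :=
      ((Set.finite_range α).subset Set.diff_subset).isClosed
    have hmem : a ∈ (Set.range α \ {a})ᶜ := by simp
    have h1 : ∀ᶠ z in nhdsWithin a {a}ᶜ, z ∈ (Set.range α \ {a})ᶜ :=
      eventually_nhdsWithin_of_eventually_nhds (hcl.isOpen_compl.eventually_mem hmem)
    filter_upwards [h1, self_mem_nhdsWithin] with z h1 h2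
    intro hzr
    exact h1 ⟨hzr, h2⟩
  -- Φ z := (z - a) * sum
  have hΦ0 : ∀ᶠ z in nhdsWithin a {a}ᶜ,
      (fun z => ∑ n, c n * ((z - a) * gg α n z)) z = 0 := by
    filter_upwards [hev] with z hz
    calc ∑ n, c n * ((z - a) * gg α n z) = (z - a) * ∑ n, c n * gg α n z := by
          rw [Finset.mul_sum]; exact Finset.sum_congr rfl fun n _ => by ring
      _ = 0 := by rw [h z hz, mul_zero]
  -- limit of each term
  have hne : ∀ n : Fin (N+1), n ≠ i.succ → a - α n ≠ 0 := by
    intro n hn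
    exact sub_ne_zero.mpr (fun hh => hn (hα hh.symm))
  have hterm : ∀ n : Fin N, Filter.Tendsto (fun z => c n * ((z - a) * gg α n z))
      (nhdsWithin a {a}ᶜ) (nhds (if n = i then c i else 0)) := by
    intro n
    by_cases hni : n = i
    · subst hni
      simp only [if_pos rfl]
      have he : ∀ᶠ z in nhdsWithin a {a}ᶜ, c n * (1 - (z - a) * (z - α 0)⁻¹)
          = c n * ((z - a) * gg α n z) := by
        filter_upwards [self_mem_nhdsWithin] with z hz
        have hza : z - a ≠ 0 := sub_ne_zero.mpr hz
        unfold gg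
        rw [← ha]
        field_simp
      have hlim : Filter.Tendsto (fun z => c n * (1 - (z - a) * (z - α 0)⁻¹))
          (nhds a) (nhds (c n * (1 - (a - a) * (a - α 0)⁻¹))) := by
        have h0 : a - α 0 ≠ 0 := hne 0 (by simp [Fin.ext_iff])
        exact (continuousAt_const.mul (continuousAt_const.sub
          (((continuous_sub_right a).continuousAt).mul
          (((continuous_sub_right (α 0)).continuousAt).inv₀ h0))))
      rw [show c n * (1 - (a - a) * (a - α 0)⁻¹) = c n by ring] at hlim
      exact Filter.Tendsto.congr' he (hlim.mono_left nhdsWithin_le_nhds)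
    · simp only [if_neg hni]
      have h1 : a - α n.succ ≠ 0 := hne n.succ (by
        intro hh; exact hni (Fin.succ_injective _ hh))
      have h0 : a - α 0 ≠ 0 := hne 0 (by simp [Fin.ext_iff])
      have hlim : Filter.Tendsto (fun z => c n * ((z - a) * gg α n z)) (nhds a)
          (nhds (c n * ((a - a) * gg α n a))) := by
        unfold gg
        exact tendsto_const_nhds.mul (((continuous_id.sub continuous_const).tendsto a).mul
          ((((continuous_id.sub continuous_const).tendsto a).inv₀ h1).sub
           (((continuous_id.sub continuous_const).tendsto a).inv₀ h0)))
      rw [show c n * ((a - a) * gg α n a) = 0 by ring] at hlim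
      exact hlim.mono_left nhdsWithin_le_nhds
  have hsum : Filter.Tendsto (fun z => ∑ n, c n * ((z - a) * gg α n z))
      (nhdsWithin a {a}ᶜ) (nhds (∑ n, if n = i then c i else 0)) :=
    tendsto_finset_sum _ (fun n _ => hterm n)
  rw [Finset.sum_ite_eq' Finset.univ i (fun _ => c i)] at hsum
  simp only [Finset.mem_univ, if_true] at hsum
  have h0 : Filter.Tendsto (fun z => ∑ n, c n * ((z - a) * gg α n z))
      (nhdsWithin a {a}ᶜ) (nhds 0) :=
    Filter.Tendsto.congr' (hΦ0.mono fun z hz => hz.symm) tendsto_const_nhds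
  have : c i = 0 := tendsto_nhds_unique hsum h0
  simpa using this


lemma key (α : Fin (N + 1) → ℂ) (hα : Function.Injective α) (hcirc : ∀ n, ‖α n‖ = 1)
    (Ω' : Set ℂ) (hopen : IsOpen Ω') (hsub : Ω' ⊆ Metric.ball 0 1)
    (z₀ : ℂ) (hz₀ : z₀ ∈ Ω')
    (b : Fin N → Fin N → ℝ) (hb : ∀ i j, b i j = b j i)
    (h : ∀ z ∈ Ω', ∑ i, ∑ j, b i j * (gg α i z * (starRingEnd ℂ) (gg α j z)).re = 0) :
    ∀ i j, b i j = 0 := by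
  classical
  set α' : Fin (N + 1) → ℂ := fun k => (starRingEnd ℂ) (α k) with hα'def
  have hα' : Function.Injective α' := fun a b hab => hα ((starRingEnd ℂ).injective hab)
  have hcirc' : ∀ n, ‖α' n‖ = 1 := fun n => by simp [hα'def, hcirc n]
  set U : Set ℂ := (Set.range α)ᶜ with hUdef
  set V : Set ℂ := (Set.range α')ᶜ with hVdef
  set F : ℂ × ℂ → ℂ := fun p => ∑ i, ∑ j, (b i j : ℂ) * (gg α i p.1 * gg α' j p.2) with hFdef
  -- analyticity
  have hFan : AnalyticOnNhd ℂ F (U ×ˢ V) := by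
    intro p hp
    apply Finset.analyticAt_fun_sum
    intro i _
    apply Finset.analyticAt_fun_sum
    intro j _
    exact analyticAt_const.mul ((analyticAt_gg_fst hp.1 i).mul (analyticAt_gg_snd hp.2 j))
  -- vanishing on the antiholomorphic diagonal over Ω'
  have hreal0 : ∀ z ∈ Ω', F (z, (starRingEnd ℂ) z) = 0 := by
    intro z hz
    have hFS : F (z, (starRingEnd ℂ) z)
        = ∑ i, ∑ j, (b i j : ℂ) * (gg α i z * (starRingEnd ℂ) (gg α j z)) := by
      refine Finset.sum_congr rfl fun i _ => Finset.sum_congr rfl fun j _ => ?_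
      rw [conj_gg]
    set S := ∑ i, ∑ j, (b i j : ℂ) * (gg α i z * (starRingEnd ℂ) (gg α j z)) with hSdef
    have hconj : (starRingEnd ℂ) S = S := by
      have h1 : (starRingEnd ℂ) S
          = ∑ i, ∑ j, (b i j : ℂ) * ((starRingEnd ℂ) (gg α i z) * gg α j z) := by
        rw [hSdef, map_sum]
        refine Finset.sum_congr rfl fun i _ => ?_
        rw [map_sum]
        refine Finset.sum_congr rfl fun j _ => ?_
        simp [map_mul, Complex.conj_ofReal]
      rw [h1, Finset.sum_comm, hSdef]
      refine Finset.sum_congr rfl fun i _ => Finset.sum_congr rfl fun j _ => ?_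
      rw [hb i j]
      ring
    have him : S.im = 0 := by
      have := congrArg Complex.im hconj
      simp at this
      linarith
    have hre : S.re = 0 := by
      have hrs : S.re = ∑ i, ∑ j, b i j * (gg α i z * (starRingEnd ℂ) (gg α j z)).re := by
        rw [hSdef, Complex.re_sum]
        refine Finset.sum_congr rfl fun i _ => ?_
        rw [Complex.re_sum]
        exact Finset.sum_congr rfl fun j _ => by rw [Complex.re_ofReal_mul]
      rw [hrs]
      exact h z hz
    rw [hFS]
    exact Complex.ext hre him
  -- geometry
  have hz1 : ‖z₀‖ < 1 := mem_ball_zero_iff.mp (hsub hz₀)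
  obtain ⟨ε, hε, hball⟩ := Metric.isOpen_iff.mp hopen z₀ hz₀
  set r : ℝ := min (ε / 2) ((1 - ‖z₀‖) / 2) with hrdef
  have hr : 0 < r := lt_min (by linarith) (by linarith)
  have hrε : r ≤ ε / 2 := min_le_left _ _
  have hr1 : r ≤ (1 - ‖z₀‖) / 2 := min_le_right _ _
  -- membership of shifted points in U ×ˢ V
  have hmemUV : ∀ t s : ℂ, ‖t‖ < r → ‖s‖ < r →
      (z₀ + t + s, (starRingEnd ℂ) z₀ + t - s) ∈ U ×ˢ V := by
    intro t s ht hs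
    have hn1 : ‖z₀ + t + s‖ < 1 := by
      calc ‖z₀ + t + s‖ ≤ ‖z₀‖ + ‖t‖ + ‖s‖ := norm_add₃_le
        _ < 1 := by linarith
    have hn2 : ‖(starRingEnd ℂ) z₀ + t - s‖ < 1 := by
      calc ‖(starRingEnd ℂ) z₀ + t - s‖ ≤ ‖(starRingEnd ℂ) z₀ + t‖ + ‖s‖ := norm_sub_le _ _
        _ ≤ ‖(starRingEnd ℂ) z₀‖ + ‖t‖ + ‖s‖ := by
            have := norm_add_le ((starRingEnd ℂ) z₀) t
            linarith
        _ < 1 := by rw [RCLike.norm_conj]; linarith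
    constructor
    · rintro ⟨n, hn⟩
      have hn' : α n = z₀ + t + s := hn
      rw [← hn', hcirc n] at hn1
      exact lt_irrefl _ hn1
    · rintro ⟨n, hn⟩
      have hn' : α' n = (starRingEnd ℂ) z₀ + t - s := hn
      rw [← hn', hcirc' n] at hn2
      exact lt_irrefl _ hn2
  set m : ℂ → ℂ → ℂ := fun t s => F (z₀ + t + s, (starRingEnd ℂ) z₀ + t - s) with hmdef
  -- vanishing for real t and imaginary s
  have hm_real : ∀ t s : ℝ, |t| < r → |s| < r → m (t : ℂ) (Complex.I * (s : ℂ)) = 0 := by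
    intro t s ht hs
    have hzΩ : z₀ + (t : ℂ) + Complex.I * (s : ℂ) ∈ Ω' := by
      apply hball
      rw [Metric.mem_ball, dist_eq_norm]
      have : z₀ + (t : ℂ) + Complex.I * (s : ℂ) - z₀ = (t : ℂ) + Complex.I * (s : ℂ) := by ring
      rw [this]
      calc ‖(t : ℂ) + Complex.I * (s : ℂ)‖ ≤ ‖(t : ℂ)‖ + ‖Complex.I * (s : ℂ)‖ := norm_add_le _ _
        _ = |t| + |s| := by simp
        _ < ε := by linarith [hrε]
    have hconjz : (starRingEnd ℂ) (z₀ + (t : ℂ) + Complex.I * (s : ℂ))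
        = (starRingEnd ℂ) z₀ + (t : ℂ) - Complex.I * (s : ℂ) := by
      simp [map_add, map_mul, Complex.conj_ofReal, Complex.conj_I]
      ring
    have := hreal0 _ hzΩ
    rw [hconjz] at this
    exact this
  -- sequence of real points tending to 0 within ≠ 0
  have hseqR : Filter.Tendsto (fun n : ℕ => ((r / 2 / (n + 1) : ℝ) : ℂ)) Filter.atTop
      (nhdsWithin 0 {(0 : ℂ)}ᶜ) := by
    apply tendsto_nhdsWithin_of_tendsto_nhds_of_eventually_within
    · have hre : Filter.Tendsto (fun n : ℕ => (r / 2 / (n + 1) : ℝ)) Filter.atTop (nhds 0) := by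
        have := (tendsto_one_div_add_atTop_nhds_zero_nat).const_mul (r / 2)
        rw [mul_zero] at this
        exact this.congr fun n => by rw [mul_one_div]
      have h2 := (Complex.continuous_ofReal.tendsto 0).comp hre
      simp only [Complex.ofReal_zero] at h2
      exact h2
    · filter_upwards with n
      simp only [Set.mem_compl_iff, Set.mem_singleton_iff, Complex.ofReal_eq_zero]
      positivity
  have hseq_bound : ∀ n : ℕ, |(r / 2 / (n + 1) : ℝ)| < r := by
    intro n
    rw [abs_of_pos (by positivity)]
    have h1 : (r / 2 / (n + 1) : ℝ) ≤ r / 2 := by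
      apply div_le_self (by positivity)
      linarith [Nat.cast_nonneg (α := ℝ) n]
    linarith
  -- analyticity of slices
  have han_t : ∀ s : ℂ, ‖s‖ < r → AnalyticOnNhd ℂ (fun t => m t s) (Metric.ball 0 r) := by
    intro s hs t ht
    rw [Metric.mem_ball, dist_zero_right] at ht
    have hin : AnalyticAt ℂ (fun u : ℂ => (z₀ + u + s, (starRingEnd ℂ) z₀ + u - s)) t :=
      ((analyticAt_const.add analyticAt_id).add analyticAt_const).prod
        ((analyticAt_const.add analyticAt_id).sub analyticAt_const)
    exact AnalyticAt.comp (g := F) (f := fun u : ℂ => (z₀ + u + s, (starRingEnd ℂ) z₀ + u - s))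
      (hFan _ (hmemUV t s ht hs)) hin
  have han_s : ∀ t : ℂ, ‖t‖ < r → AnalyticOnNhd ℂ (fun s => m t s) (Metric.ball 0 r) := by
    intro t ht s hs
    rw [Metric.mem_ball, dist_zero_right] at hs
    have hin : AnalyticAt ℂ (fun u : ℂ => (z₀ + t + u, (starRingEnd ℂ) z₀ + t - u)) s :=
      (analyticAt_const.add analyticAt_id).prod (analyticAt_const.sub analyticAt_id)
    exact AnalyticAt.comp (g := F) (f := fun u : ℂ => (z₀ + t + u, (starRingEnd ℂ) z₀ + t - u))
      (hFan _ (hmemUV t s ht hs)) hin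
  -- step B1: for fixed imaginary s, kill all complex t
  have hB1 : ∀ s : ℝ, |s| < r → ∀ t : ℂ, ‖t‖ < r → m t (Complex.I * (s : ℂ)) = 0 := by
    intro s hs t ht
    have hsn : ‖Complex.I * (s : ℂ)‖ < r := by
      rw [norm_mul, Complex.norm_I, one_mul, Complex.norm_real, Real.norm_eq_abs]
      exact hs
    have hfreq : ∃ᶠ z in nhdsWithin 0 {(0 : ℂ)}ᶜ, (fun t => m t (Complex.I * (s : ℂ))) z = 0 :=
      hseqR.frequently (Filter.Eventually.frequently
        (Filter.Eventually.of_forall fun n => hm_real _ s (hseq_bound n) hs))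
    have := (han_t _ hsn).eqOn_zero_of_preconnected_of_frequently_eq_zero
      (convex_ball (0 : ℂ) r).isPreconnected (Metric.mem_ball_self hr) hfreq
    exact this (by rwa [Metric.mem_ball, dist_zero_right])
  -- step B2: kill all complex s
  have hB2 : ∀ t : ℂ, ‖t‖ < r → ∀ s : ℂ, ‖s‖ < r → m t s = 0 := by
    intro t ht s hs
    have hseqI : Filter.Tendsto (fun n : ℕ => Complex.I * ((r / 2 / (n + 1) : ℝ) : ℂ))
        Filter.atTop (nhdsWithin 0 {(0 : ℂ)}ᶜ) := by
      apply tendsto_nhdsWithin_of_tendsto_nhds_of_eventually_within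
      · have := (hseqR.mono_right nhdsWithin_le_nhds).const_mul Complex.I
        rwa [mul_zero] at this
      · filter_upwards with n
        simp only [Set.mem_compl_iff, Set.mem_singleton_iff, mul_eq_zero, Complex.I_ne_zero,
          false_or, Complex.ofReal_eq_zero]
        positivity
    have hfreq : ∃ᶠ z in nhdsWithin 0 {(0 : ℂ)}ᶜ, (fun s => m t s) z = 0 :=
      hseqI.frequently (Filter.Eventually.frequently
        (Filter.Eventually.of_forall fun n => hB1 _ (hseq_bound n) t ht))
    have := (han_s t ht).eqOn_zero_of_preconnected_of_frequently_eq_zero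
      (convex_ball (0 : ℂ) r).isPreconnected (Metric.mem_ball_self hr) hfreq
    exact this (by rwa [Metric.mem_ball, dist_zero_right])
  -- step B3: F vanishes near (z₀, conj z₀)
  have hB3 : ∀ p : ℂ × ℂ, p ∈ Metric.ball z₀ r ×ˢ Metric.ball ((starRingEnd ℂ) z₀) r →
      F p = 0 := by
    rintro ⟨z, w⟩ ⟨hz, hw⟩
    rw [Metric.mem_ball, dist_eq_norm] at hz hw
    set t : ℂ := ((z - z₀) + (w - (starRingEnd ℂ) z₀)) / 2 with htdef
    set s : ℂ := ((z - z₀) - (w - (starRingEnd ℂ) z₀)) / 2 with hsdef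
    have ht : ‖t‖ < r := by
      calc ‖t‖ ≤ (‖z - z₀‖ + ‖w - (starRingEnd ℂ) z₀‖) / 2 := by
            rw [htdef, norm_div]
            simp only [Complex.norm_ofNat]
            exact div_le_div_of_nonneg_right (norm_add_le _ _) (by norm_num)
        _ < r := by linarith
    have hs : ‖s‖ < r := by
      calc ‖s‖ ≤ (‖z - z₀‖ + ‖w - (starRingEnd ℂ) z₀‖) / 2 := by
            rw [hsdef, norm_div]
            simp only [Complex.norm_ofNat]
            exact div_le_div_of_nonneg_right (norm_sub_le _ _) (by norm_num)
        _ < r := by linarith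
    have harg : (z, w) = (z₀ + t + s, (starRingEnd ℂ) z₀ + t - s) := by
      rw [htdef, hsdef, Prod.mk.injEq]
      constructor <;> ring
    rw [harg]
    exact hB2 t ht s hs
  -- step B4: F vanishes on all of U ×ˢ V
  have hUconn : IsConnected U := by
    rw [hUdef]
    exact (Set.finite_range α).countable.isConnected_compl_of_one_lt_rank
      (Complex.rank_real_complex ▸ Nat.one_lt_ofNat)
  have hVconn : IsConnected V := by
    rw [hVdef]
    exact (Set.finite_range α').countable.isConnected_compl_of_one_lt_rank
      (Complex.rank_real_complex ▸ Nat.one_lt_ofNat)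
  have hmemz₀ : (z₀, (starRingEnd ℂ) z₀) ∈ U ×ˢ V := by
    constructor
    · rintro ⟨n, hn⟩
      have hn' : α n = z₀ := hn
      rw [← hn', hcirc n] at hz1
      exact lt_irrefl _ hz1
    · rintro ⟨n, hn⟩
      have hn' : α' n = (starRingEnd ℂ) z₀ := hn
      have : ‖(starRingEnd ℂ) z₀‖ < 1 := by rwa [RCLike.norm_conj]
      rw [← hn', hcirc' n] at this
      exact lt_irrefl _ this
  have hB4 : Set.EqOn F 0 (U ×ˢ V) := by
    apply hFan.eqOn_zero_of_preconnected_of_eventuallyEq_zero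
      (hUconn.isPreconnected.prod hVconn.isPreconnected) hmemz₀
    have hnhds : Metric.ball z₀ r ×ˢ Metric.ball ((starRingEnd ℂ) z₀) r
        ∈ nhds (z₀, (starRingEnd ℂ) z₀) :=
      prod_mem_nhds (Metric.ball_mem_nhds _ hr) (Metric.ball_mem_nhds _ hr)
    exact Filter.eventuallyEq_of_mem hnhds hB3
  -- step C: extract coefficients
  have hC1 : ∀ i : Fin N, ∀ w, w ∉ Set.range α' → ∑ j, (b i j : ℂ) * gg α' j w = 0 := by
    intro i w hw
    have hker : ∀ z, z ∉ Set.range α →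
        ∑ i', (∑ j, (b i' j : ℂ) * gg α' j w) * gg α i' z = 0 := by
      intro z hz
      have hF0 : F (z, w) = 0 := hB4 ⟨hz, hw⟩
      rw [← hF0]
      refine (Finset.sum_congr rfl fun i' _ => ?_).symm
      rw [Finset.sum_mul]
      exact Finset.sum_congr rfl fun j _ => by ring
    have := indep α hα (fun i' => ∑ j, (b i' j : ℂ) * gg α' j w)
      (fun z hz => by simpa using hker z hz)
    exact congrFun this i
  intro i j
  have := indep α' hα' (fun j => (b i j : ℂ)) (fun w hw => hC1 i w hw)
  have hbij : (b i j : ℂ) = 0 := congrFun this j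
  exact_mod_cast hbij

/-- the isometry between the Euclidean plane and ℂ -/
noncomputable def e2c : EuclideanSpace ℝ (Fin 2) ≃ₗᵢ[ℝ] ℂ :=
  Complex.orthonormalBasisOneI.repr.symm

lemma smul_inv_eq_conj_inv (w : ℂ) : (‖w‖ ^ 2)⁻¹ • w = (starRingEnd ℂ) w⁻¹ := by
  rcases eq_or_ne w 0 with h | h
  · simp [h]
  · rw [map_inv₀, Complex.inv_def, Complex.conj_conj, Complex.normSq_conj]
    rw [Complex.real_smul]
    rw [Complex.ofReal_inv]
    rw [← Complex.sq_norm]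
    push_cast
    ring

lemma e2c_G (x : Fin (N + 1) → EuclideanSpace ℝ (Fin 2)) (n : Fin N)
    (p : EuclideanSpace ℝ (Fin 2)) :
    e2c (G x n p) = (starRingEnd ℂ) (gg (fun k => e2c (x k)) n (e2c p)) := by
  unfold G gg
  rw [map_sub, LinearIsometryEquiv.map_smul, LinearIsometryEquiv.map_smul, map_sub, map_sub,
    map_sub]
  rw [show ‖p - x n.succ‖ = ‖e2c p - e2c (x n.succ)‖ by rw [← map_sub]; exact (e2c.norm_map _).symm]
  rw [show ‖p - x 0‖ = ‖e2c p - e2c (x 0)‖ by rw [← map_sub]; exact (e2c.norm_map _).symm]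
  simp only [smul_inv_eq_conj_inv]

lemma inner_G (x : Fin (N + 1) → EuclideanSpace ℝ (Fin 2)) (i j : Fin N)
    (p : EuclideanSpace ℝ (Fin 2)) :
    (inner ℝ (G x i p) (G x j p) : ℝ)
      = (gg (fun k => e2c (x k)) i (e2c p) * (starRingEnd ℂ) (gg (fun k => e2c (x k)) j (e2c p))).re := by
  rw [inner_map_complex e2c, e2c_G, e2c_G, Complex.conj_conj, mul_comm]

end BiorthAux

namespace Inner2

open BiorthAux

lemma re_symm (u v : ℂ) : (u * (starRingEnd ℂ) v).re = (v * (starRingEnd ℂ) u).re := by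
  rw [← Complex.conj_re (u * (starRingEnd ℂ) v), map_mul, Complex.conj_conj, mul_comm]

/-- independence of the products over any nonempty open subset of the disk -/
lemma indepE {N : ℕ} (x : Fin (N + 1) → EuclideanSpace ℝ (Fin 2))
    (hx : Function.Injective x) (hcirc : ∀ n, ‖x n‖ = 1)
    (Ω : Set (EuclideanSpace ℝ (Fin 2))) (hΩopen : IsOpen Ω) (hΩne : Ω.Nonempty)
    (hΩD : closure Ω ⊆ Metric.ball (0 : EuclideanSpace ℝ (Fin 2)) 1)
    (c : Fin N → Fin N → ℝ) (hc : ∀ i j : Fin N, ¬ i ≤ j → c i j = 0)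
    (h : ∀ p ∈ Ω, ∑ i, ∑ j, c i j *
      ((1 / Real.pi ^ 2) * (inner ℝ (G x i p) (G x j p) : ℝ)) = 0) :
    c = 0 := by
  classical
  set α : Fin (N + 1) → ℂ := fun k => e2c (x k) with hαdef
  have hα : Function.Injective α := fun a b hab => hx (e2c.injective hab)
  have hcircα : ∀ n, ‖α n‖ = 1 := fun n => by
    rw [hαdef]
    simp only
    rw [e2c.norm_map]
    exact hcirc n
  set Ω' : Set ℂ := e2c '' Ω with hΩ'def
  have hopen' : IsOpen Ω' := e2c.toHomeomorph.isOpenMap Ω hΩopen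
  have hsub' : Ω' ⊆ Metric.ball 0 1 := by
    rintro z ⟨p, hp, rfl⟩
    rw [mem_ball_zero_iff, e2c.norm_map]
    exact mem_ball_zero_iff.mp (hΩD (subset_closure hp))
  obtain ⟨p₀, hp₀⟩ := hΩne
  set b : Fin N → Fin N → ℝ := fun i j => (c i j + c j i) / 2 with hbdef
  have hbsymm : ∀ i j, b i j = b j i := fun i j => by rw [hbdef]; ring
  have hkey : ∀ i j, b i j = 0 := by
    apply key α hα hcircα Ω' hopen' hsub' (e2c p₀) ⟨p₀, hp₀, rfl⟩ b hbsymm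
    rintro z ⟨p, hp, rfl⟩
    have hR : ∀ i j : Fin N, (inner ℝ (G x i p) (G x j p) : ℝ)
        = (gg α i (e2c p) * (starRingEnd ℂ) (gg α j (e2c p))).re := fun i j => inner_G x i j p
    have hc0 : ∑ i, ∑ j, c i j * (gg α i (e2c p) * (starRingEnd ℂ) (gg α j (e2c p))).re = 0 := by
      have h1 := h p hp
      have h2 : ∑ i, ∑ j, c i j * ((1 / Real.pi ^ 2) * (inner ℝ (G x i p) (G x j p) : ℝ))
          = (1 / Real.pi ^ 2) * ∑ i, ∑ j, c i j
            * (gg α i (e2c p) * (starRingEnd ℂ) (gg α j (e2c p))).re := by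
        rw [Finset.mul_sum]
        refine Finset.sum_congr rfl fun i _ => ?_
        rw [Finset.mul_sum]
        refine Finset.sum_congr rfl fun j _ => ?_
        rw [hR i j]; ring
      rw [h2] at h1
      have hπ : (1 / Real.pi ^ 2) ≠ 0 := by positivity
      exact (mul_eq_zero.mp h1).resolve_left hπ
    have hswap : ∑ i, ∑ j, c j i * (gg α i (e2c p) * (starRingEnd ℂ) (gg α j (e2c p))).re
        = ∑ i, ∑ j, c i j * (gg α i (e2c p) * (starRingEnd ℂ) (gg α j (e2c p))).re := by
      rw [Finset.sum_comm]
      refine Finset.sum_congr rfl fun i _ => Finset.sum_congr rfl fun j _ => ?_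
      rw [re_symm]
    calc ∑ i, ∑ j, b i j * (gg α i (e2c p) * (starRingEnd ℂ) (gg α j (e2c p))).re
        = (∑ i, ∑ j, c i j * (gg α i (e2c p) * (starRingEnd ℂ) (gg α j (e2c p))).re
          + ∑ i, ∑ j, c j i * (gg α i (e2c p) * (starRingEnd ℂ) (gg α j (e2c p))).re) / 2 := by
          rw [← Finset.sum_add_distrib]
          rw [Finset.sum_div]
          refine Finset.sum_congr rfl fun i _ => ?_
          rw [← Finset.sum_add_distrib, Finset.sum_div]
          refine Finset.sum_congr rfl fun j _ => ?_
          rw [hbdef]; ring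
      _ = 0 := by rw [hc0, hswap, hc0]; norm_num
  funext i j
  rcases le_or_gt i j with hij | hij
  · rcases eq_or_lt_of_le hij with heq | hlt
    · subst heq
      have := hkey i i
      rw [hbdef] at this
      simp only at this
      simp only [Pi.zero_apply]
      linarith
    · have hji : c j i = 0 := hc j i (not_le.mpr hlt)
      have := hkey i j
      rw [hbdef] at this
      simp only at this
      simp only [Pi.zero_apply]
      linarith
  · simp only [Pi.zero_apply]
    exact hc i j (not_le.mpr hij)

end Inner2

/-- Lemma 3.4 + Proposition 4.1: existence of bounded measurable perturbation shape
functions `κ_{ij}` supported in the closure of `Ω`, biorthogonal to the family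
`∇u_{i'}⁰ · ∇u_{j'}⁰ = (1/π²)⟨G_{i'}, G_{j'}⟩` in the sense of conditions (3.8). -/
theorem exists_biorthogonal_perturbations_disk
    (N : ℕ) (hN : 1 ≤ N)
    (x : Fin (N + 1) → EuclideanSpace ℝ (Fin 2))
    (hx : Function.Injective x)
    (hcirc : ∀ n, ‖x n‖ = 1)
    (Ω : Set (EuclideanSpace ℝ (Fin 2)))
    (hΩopen : IsOpen Ω) (hΩne : Ω.Nonempty)
    (hΩD : closure Ω ⊆ Metric.ball (0 : EuclideanSpace ℝ (Fin 2)) 1) :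
    ∃ κ : Fin N → Fin N → EuclideanSpace ℝ (Fin 2) → ℝ,
      ∀ i j : Fin N, i ≤ j →
        Measurable (κ i j) ∧
        (∃ C : ℝ, ∀ p, |κ i j p| ≤ C) ∧
        (∀ p ∉ closure Ω, κ i j p = 0) ∧
        (∀ i' j' : Fin N, i' ≤ j' →
          ∫ p, κ i j p * ((1 / Real.pi ^ 2) * (inner ℝ (G x i' p) (G x j' p) : ℝ)) =
            if i = i' ∧ j = j' then 1 else 0) := by
  classical
  set K := closure Ω with hKdef
  have hKclosed : IsClosed K := isClosed_closure
  have hKcompact : IsCompact K :=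
    Metric.isCompact_of_isClosed_isBounded hKclosed (Metric.isBounded_ball.subset hΩD)
  have hKmeas : MeasurableSet K := hKclosed.measurableSet
  have hKfin : volume K ≠ ⊤ := hKcompact.measure_lt_top.ne
  -- the family of functions indexed by ordered pairs
  set f : {q : Fin N × Fin N // q.1 ≤ q.2} → EuclideanSpace ℝ (Fin 2) → ℝ :=
    fun q p => (1 / Real.pi ^ 2) * (inner ℝ (G x q.1.1 p) (G x q.1.2 p) : ℝ) with hfdef
  -- measurability
  have hGmeas : ∀ n : Fin N, Measurable (G x n) := by
    intro n
    apply Measurable.sub <;>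
    · refine Measurable.smul (f := fun p => (‖p - _‖ ^ 2)⁻¹) (g := fun p => p - _) ?_ ?_
      · exact (((continuous_id.sub continuous_const).norm.pow 2).measurable).inv
      · exact (continuous_id.sub continuous_const).measurable
  have hfmeas : ∀ q, Measurable (f q) := fun q =>
    measurable_const.mul ((hGmeas _).inner (hGmeas _))
  -- continuity on the unit ball
  have hGcont : ∀ n : Fin N, ContinuousOn (G x n)
      (Metric.ball (0 : EuclideanSpace ℝ (Fin 2)) 1) := by
    intro n
    have hne : ∀ (k : Fin (N + 1)) (p : EuclideanSpace ℝ (Fin 2)),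
        p ∈ Metric.ball (0 : EuclideanSpace ℝ (Fin 2)) 1 → ‖p - x k‖ ^ 2 ≠ 0 := by
      intro k p hp
      have : p ≠ x k := by
        intro hcontr
        rw [mem_ball_zero_iff, hcontr, hcirc k] at hp
        exact lt_irrefl _ hp
      have h2 : p - x k ≠ 0 := sub_ne_zero.mpr this
      exact pow_ne_zero 2 (norm_ne_zero_iff.mpr h2)
    apply ContinuousOn.sub <;>
    · refine ContinuousOn.smul (f := fun p => (‖p - _‖ ^ 2)⁻¹) (g := fun p => p - _) ?_ ?_
      · exact (((continuous_id.sub continuous_const).norm.pow 2).continuousOn).inv₀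
          (fun p hp => hne _ p hp)
      · exact (continuous_id.sub continuous_const).continuousOn
  have hfcont : ∀ q, ContinuousOn (f q) (Metric.ball (0 : EuclideanSpace ℝ (Fin 2)) 1) :=
    fun q => continuousOn_const.mul ((hGcont _).inner (hGcont _))
  -- bounds on K
  have hCf : ∀ q, ∃ C : ℝ, ∀ p ∈ K, ‖f q p‖ ≤ C := fun q =>
    hKcompact.exists_bound_of_continuousOn ((hfcont q).mono hΩD)
  choose Cf hCf using hCf
  -- integrability of products on K
  have hint : ∀ q r, IntegrableOn (fun p => f q p * f r p) K volume := by
    intro q r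
    apply Measure.integrableOn_of_bounded hKfin (((hfmeas q).mul (hfmeas r)).aestronglyMeasurable)
    filter_upwards [ae_restrict_mem hKmeas] with p hp
    rw [Pi.mul_apply, norm_mul]
    exact mul_le_mul (hCf q p hp) (hCf r p hp) (norm_nonneg _)
      ((norm_nonneg _).trans (hCf q p hp))
  -- Gram matrix
  set A : Matrix {q : Fin N × Fin N // q.1 ≤ q.2} {q : Fin N × Fin N // q.1 ≤ q.2} ℝ :=
    fun q r => ∫ p in K, f q p * f r p with hAdef
  have hAsymm : ∀ q r, A q r = A r q := by
    intro q r
    rw [hAdef]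
    exact integral_congr_ae (Filter.Eventually.of_forall fun p => mul_comm _ _)
  -- injectivity of the Gram matrix
  have hker : ∀ d : {q : Fin N × Fin N // q.1 ≤ q.2} → ℝ, A.mulVec d = 0 → d = 0 := by
    intro d hd
    by_contra hd0
    set S : EuclideanSpace ℝ (Fin 2) → ℝ := fun p => ∑ q, d q * f q p with hSdef
    have hSexp : ∀ p, S p ^ 2 = ∑ q, ∑ r, d q * d r * (f q p * f r p) := by
      intro p
      rw [hSdef, sq]
      rw [Finset.sum_mul_sum]
      exact Finset.sum_congr rfl fun q _ => Finset.sum_congr rfl fun r _ => by ring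
    have hintS2 : IntegrableOn (fun p => S p ^ 2) K volume := by
      apply MeasureTheory.Integrable.congr
        (integrable_finset_sum _ (fun q _ => integrable_finset_sum _
          (fun r _ => (hint q r).const_mul (d q * d r))))
      exact Filter.Eventually.of_forall fun p => (hSexp p).symm
    have hquad : ∫ p in K, S p ^ 2 = 0 := by
      have h1 : ∫ p in K, S p ^ 2 = ∑ q, ∑ r, d q * d r * A q r := by
        calc ∫ p in K, S p ^ 2
            = ∫ p in K, ∑ q, ∑ r, d q * d r * (f q p * f r p) :=
              integral_congr_ae (Filter.Eventually.of_forall fun p => hSexp p)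
          _ = ∑ q, ∫ p in K, ∑ r, d q * d r * (f q p * f r p) :=
              integral_finset_sum _ (fun q _ => integrable_finset_sum _
                (fun r _ => (hint q r).const_mul (d q * d r)))
          _ = ∑ q, ∑ r, d q * d r * A q r := by
              refine Finset.sum_congr rfl fun q _ => ?_
              rw [integral_finset_sum _ (fun r _ => (hint q r).const_mul (d q * d r))]
              exact Finset.sum_congr rfl fun r _ => integral_const_mul _ _
      have h2 : ∑ q, ∑ r, d q * d r * A q r = 0 := by
        have h3 : ∀ q, ∑ r, d q * d r * A q r = d q * (A.mulVec d) q := by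
          intro q
          rw [Matrix.mulVec, dotProduct, Finset.mul_sum]
          exact Finset.sum_congr rfl fun r _ => by ring
        rw [Finset.sum_congr rfl fun q _ => h3 q, hd]
        simp
      rw [h1, h2]
    -- from d ≠ 0 we get a point in Ω where S is nonzero
    have hSne : ∃ p₀ ∈ Ω, S p₀ ≠ 0 := by
      by_contra hall
      push_neg at hall
      apply hd0
      set c : Fin N → Fin N → ℝ :=
        fun i j => if h : i ≤ j then d ⟨(i, j), h⟩ else 0 with hcdef
      have hsum_conv : ∀ (R : Fin N → Fin N → ℝ),
          ∑ i, ∑ j, c i j * R i j = ∑ q, d q * R q.1.1 q.1.2 := by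
        intro R
        rw [← Fintype.sum_prod_type' (f := fun i j => c i j * R i j)]
        rw [← Finset.sum_filter_add_sum_filter_not Finset.univ
          (fun ij : Fin N × Fin N => ij.1 ≤ ij.2)]
        have h2 : ∑ ij ∈ Finset.univ.filter (fun ij : Fin N × Fin N => ¬ ij.1 ≤ ij.2),
            c ij.1 ij.2 * R ij.1 ij.2 = 0 := by
          apply Finset.sum_eq_zero
          intro ij hij
          rw [Finset.mem_filter] at hij
          rw [hcdef]
          simp only [dif_neg hij.2]
          ring
        rw [h2, add_zero]
        rw [Finset.sum_subtype (p := fun ij : Fin N × Fin N => ij.1 ≤ ij.2)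
          (Finset.univ.filter (fun ij : Fin N × Fin N => ij.1 ≤ ij.2))
          (fun ij => by simp) (fun ij => c ij.1 ij.2 * R ij.1 ij.2)]
        refine Finset.sum_congr rfl fun q _ => ?_
        rw [hcdef]
        simp only [dif_pos q.2]
      have hcz := Inner2.indepE x hx hcirc Ω hΩopen hΩne hΩD c
        (fun i j hij => by rw [hcdef]; simp only [dif_neg hij]) ?_
      · funext q
        have := congrFun (congrFun hcz q.1.1) q.1.2
        rw [hcdef] at this
        simp only [dif_pos q.2, Pi.zero_apply] at this
        simpa using this
      · intro p hp
        have := hall p hp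
        rw [hSdef] at this
        calc ∑ i, ∑ j, c i j * ((1 / Real.pi ^ 2) * (inner ℝ (G x i p) (G x j p) : ℝ))
            = ∑ q, d q * f q p := hsum_conv _
          _ = 0 := this
    obtain ⟨p₀, hp₀Ω, hSp₀⟩ := hSne
    -- positivity of the integral
    have hp₀ball : p₀ ∈ Metric.ball (0 : EuclideanSpace ℝ (Fin 2)) 1 := hΩD (subset_closure hp₀Ω)
    have hScont : ContinuousOn S (Metric.ball (0 : EuclideanSpace ℝ (Fin 2)) 1) := by
      rw [hSdef]
      apply continuousOn_finset_sum
      intro q _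
      exact continuousOn_const.mul (hfcont q)
    have hSat : ContinuousAt (fun p => S p ^ 2) p₀ :=
      ((hScont.continuousAt (Metric.isOpen_ball.mem_nhds hp₀ball)).pow 2)
    have hε : (0 : ℝ) < S p₀ ^ 2 / 2 := by
      have : 0 < S p₀ ^ 2 := lt_of_le_of_ne (sq_nonneg _) (Ne.symm (pow_ne_zero 2 hSp₀))
      linarith
    have hev : ∀ᶠ p in nhds p₀, S p₀ ^ 2 / 2 ≤ S p ^ 2 ∧ p ∈ Ω := by
      have h1 : ∀ᶠ p in nhds p₀, S p₀ ^ 2 / 2 < S p ^ 2 :=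
        hSat.eventually_const_lt (by linarith)
      have h2 : ∀ᶠ p in nhds p₀, p ∈ Ω := hΩopen.eventually_mem hp₀Ω
      filter_upwards [h1, h2] with p h1 h2
      exact ⟨le_of_lt h1, h2⟩
    obtain ⟨ρ, hρpos, hρ⟩ := Metric.eventually_nhds_iff_ball.mp hev
    have hsubset : Metric.ball p₀ ρ ⊆ K := fun p hp => subset_closure (hρ p hp).2
    have hlow : S p₀ ^ 2 / 2 * (volume (Metric.ball p₀ ρ)).toReal
        ≤ ∫ p in Metric.ball p₀ ρ, S p ^ 2 :=
      by have := setIntegral_ge_of_const_le measurableSet_ball measure_ball_lt_top.ne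
          (fun p hp => (hρ p hp).1) (hintS2.mono_set hsubset)
         simp only [smul_eq_mul, measureReal_def] at this; linarith
    have hmono : ∫ p in Metric.ball p₀ ρ, S p ^ 2 ≤ ∫ p in K, S p ^ 2 :=
      setIntegral_mono_set hintS2
        (Filter.Eventually.of_forall fun p => sq_nonneg _)
        (Filter.Eventually.of_forall (fun p hp => hsubset hp))
    have hvol : 0 < (volume (Metric.ball p₀ ρ)).toReal :=
      ENNReal.toReal_pos (Metric.measure_ball_pos volume p₀ hρpos).ne' measure_ball_lt_top.ne
    nlinarith [mul_pos hε hvol]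
  -- invert the Gram matrix via injective → surjective
  have hinj : Function.Injective A.mulVecLin := by
    rw [← LinearMap.ker_eq_bot, LinearMap.ker_eq_bot']
    intro d hd
    exact hker d hd
  have hsurj := LinearMap.injective_iff_surjective.mp hinj
  choose dd hdd using fun q : {q : Fin N × Fin N // q.1 ≤ q.2} => hsurj (Pi.single q 1)
  -- the biorthogonal family
  set κfun : {q : Fin N × Fin N // q.1 ≤ q.2} → EuclideanSpace ℝ (Fin 2) → ℝ :=
    fun q => K.indicator (fun p => ∑ r, dd q r * f r p) with hκdef
  refine ⟨fun i j => if h : i ≤ j then κfun ⟨(i, j), h⟩ else 0, ?_⟩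
  intro i j hij
  simp only [dif_pos hij]
  set q : {q : Fin N × Fin N // q.1 ≤ q.2} := ⟨(i, j), hij⟩ with hqdef
  refine ⟨?_, ?_, ?_, ?_⟩
  · exact Measurable.indicator
      (Finset.measurable_sum _ (fun r _ => measurable_const.mul (hfmeas r))) hKmeas
  · refine ⟨∑ r, |dd q r| * |Cf r|, fun p => ?_⟩
    by_cases hp : p ∈ K
    · rw [show κfun q p = ∑ r, dd q r * f r p from Set.indicator_of_mem hp _]
      calc |∑ r, dd q r * f r p| ≤ ∑ r, |dd q r * f r p| := Finset.abs_sum_le_sum_abs _ _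
        _ ≤ ∑ r, |dd q r| * |Cf r| := by
            apply Finset.sum_le_sum
            intro r _
            rw [abs_mul]
            apply mul_le_mul_of_nonneg_left _ (abs_nonneg _)
            calc |f r p| ≤ Cf r := by rw [← Real.norm_eq_abs]; exact hCf r p hp
              _ ≤ |Cf r| := le_abs_self _
    · rw [show κfun q p = 0 from Set.indicator_of_notMem hp _, abs_zero]
      apply Finset.sum_nonneg
      intro r _
      positivity
  · intro p hp
    exact Set.indicator_of_notMem hp _
  · intro i' j' hij'
    set q' : {q : Fin N × Fin N // q.1 ≤ q.2} := ⟨(i', j'), hij'⟩ with hq'def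
    have hstep : ∫ p, κfun q p * f q' p = ∑ r, dd q r * A r q' := by
      have h1 : ∀ p, κfun q p * f q' p
          = K.indicator (fun p => ∑ r, dd q r * (f r p * f q' p)) p := by
        intro p
        by_cases hp : p ∈ K
        · rw [Set.indicator_of_mem hp,
            show κfun q p = ∑ r, dd q r * f r p from Set.indicator_of_mem hp _,
            Finset.sum_mul]
          exact Finset.sum_congr rfl fun r _ => by ring
        · rw [Set.indicator_of_notMem hp,
            show κfun q p = 0 from Set.indicator_of_notMem hp _, zero_mul]
      calc ∫ p, κfun q p * f q' p
          = ∫ p, K.indicator (fun p => ∑ r, dd q r * (f r p * f q' p)) p :=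
            integral_congr_ae (Filter.Eventually.of_forall h1)
        _ = ∫ p in K, ∑ r, dd q r * (f r p * f q' p) := integral_indicator hKmeas
        _ = ∑ r, ∫ p in K, dd q r * (f r p * f q' p) :=
            integral_finset_sum _ (fun r _ => (hint r q').const_mul (dd q r))
        _ = ∑ r, dd q r * A r q' := by
            refine Finset.sum_congr rfl fun r _ => ?_
            rw [integral_const_mul]
    rw [hstep]
    have h2 : ∑ r, dd q r * A r q' = (A.mulVecLin (dd q)) q' := by
      rw [Matrix.mulVecLin_apply, Matrix.mulVec, dotProduct]
      exact Finset.sum_congr rfl fun r _ => by rw [hAsymm q' r]; ring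
    rw [h2, hdd q]
    rw [Pi.single_apply]
    by_cases hc : i = i' ∧ j = j'
    · obtain ⟨hA1, hA2⟩ := hc
      subst hA1; subst hA2
      rw [if_pos rfl, if_pos ⟨rfl, rfl⟩]
    · rw [if_neg hc, if_neg]
      intro hqq
      apply hc
      have := Subtype.ext_iff.mp hqq
      rw [hq'def, hqdef] at this
      simp only [Prod.mk.injEq] at this
      exact ⟨this.1.symm, this.2.symm⟩
end

section
/- Let N ≥ 1, let x_0, x_1, …, x_N be distinct points of ℝ², and let α_{ij} ∈ ℝ for 1 ≤ i ≤ j ≤ N. Suppose that Σ_{j=1}^{N} Σ_{i=1}^{j} α_{ij} ⟨G_i(x), G_j(x)⟩ = 0 for every x ∈ ℝ² ∖ E. Then α_{jj} = 0 for every j = 1, …, N, and moreover Σ_{j=2}^{N} Σ_{i=1}^{j−1} α_{ij} = 0. (These are the first two steps, obtained by multiplying by ‖x − x_j‖² respectively ‖x − x_0‖² and letting x tend to x_j respectively x_0, in the proof of Proposition 4.1 of the paper.) -/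
open Finset Filter Topology

noncomputable def Fv (c p : EuclideanSpace ℝ (Fin 2)) : EuclideanSpace ℝ (Fin 2) :=
  (‖p - c‖ ^ 2)⁻¹ • (p - c)

open scoped Classical in
/-- Indicator of the point `a`. -/
noncomputable def dlt (a u : EuclideanSpace ℝ (Fin 2)) : ℝ := if u = a then 1 else 0

lemma norm_sq_ne_zero {c p : EuclideanSpace ℝ (Fin 2)} (h : p ≠ c) : ‖p - c‖ ^ 2 ≠ 0 :=
  pow_ne_zero 2 (norm_ne_zero_iff.mpr (sub_ne_zero.mpr h))

lemma contFv {c p : EuclideanSpace ℝ (Fin 2)} (h : p ≠ c) : ContinuousAt (Fv c) p := by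
  exact (((continuousAt_id.sub continuousAt_const).norm.pow 2).inv₀
    (norm_sq_ne_zero h)).smul (continuousAt_id.sub continuousAt_const)

lemma Fv_smul_left {a p : EuclideanSpace ℝ (Fin 2)} (w : EuclideanSpace ℝ (Fin 2)) (hp : p ≠ a) :
    ‖p - a‖ ^ 2 * (inner ℝ (Fv a p) w : ℝ) = inner ℝ (p - a) w := by
  rw [Fv, real_inner_smul_left]
  field_simp [norm_sq_ne_zero hp, norm_ne_zero_iff.mpr (sub_ne_zero.mpr hp)]

lemma tendsto_base (a b d : EuclideanSpace ℝ (Fin 2)) :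
    Filter.Tendsto (fun p => ‖p - a‖ ^ 2 * (inner ℝ (Fv b p) (Fv d p) : ℝ)) (𝓝[≠] a)
      (𝓝 (dlt a b * dlt a d)) := by
  by_cases hb : b = a <;> by_cases hd : d = a
  · subst hb; subst hd
    rw [show dlt d d * dlt d d = 1 by simp [dlt]]
    apply Filter.Tendsto.congr' _ (tendsto_const_nhds : Filter.Tendsto _ _ (𝓝 (1:ℝ)))
    filter_upwards [self_mem_nhdsWithin] with p hp
    have hp' : p ≠ d := hp
    have hn := norm_sq_ne_zero hp'
    rw [Fv_smul_left (Fv d p) hp', Fv, real_inner_smul_right, real_inner_self_eq_norm_sq]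
    field_simp [norm_ne_zero_iff.mpr (sub_ne_zero.mpr hp')]
  · subst hb
    rw [show dlt b b * dlt b d = 0 by simp [dlt, hd]]
    have key : Filter.Tendsto (fun p => (inner ℝ (p - b) (Fv d p) : ℝ)) (𝓝 b) (𝓝 0) := by
      have hc : ContinuousAt (fun p => (inner ℝ (p - b) (Fv d p) : ℝ)) b :=
        (continuousAt_id.sub continuousAt_const).inner (contFv (fun h => hd h.symm))
      have h0 : (inner ℝ ((b : EuclideanSpace ℝ (Fin 2)) - b) (Fv d b) : ℝ) = 0 := by simp
      simpa [h0] using hc.tendsto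
    apply Filter.Tendsto.congr' _ (key.mono_left nhdsWithin_le_nhds)
    filter_upwards [self_mem_nhdsWithin] with p hp
    exact (Fv_smul_left _ hp).symm
  · subst hd
    rw [show dlt d b * dlt d d = 0 by simp [dlt, hb]]
    have key : Filter.Tendsto (fun p => (inner ℝ (p - d) (Fv b p) : ℝ)) (𝓝 d) (𝓝 0) := by
      have hc : ContinuousAt (fun p => (inner ℝ (p - d) (Fv b p) : ℝ)) d :=
        (continuousAt_id.sub continuousAt_const).inner (contFv (fun h => hb h.symm))
      have h0 : (inner ℝ ((d : EuclideanSpace ℝ (Fin 2)) - d) (Fv b d) : ℝ) = 0 := by simp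
      simpa [h0] using hc.tendsto
    apply Filter.Tendsto.congr' _ (key.mono_left nhdsWithin_le_nhds)
    filter_upwards [self_mem_nhdsWithin] with p hp
    rw [← Fv_smul_left (Fv b p) hp, real_inner_comm (Fv d p)]
  · rw [show dlt a b * dlt a d = 0 by simp [dlt, hb, hd]]
    have hc : ContinuousAt (fun p => ‖p - a‖ ^ 2 * (inner ℝ (Fv b p) (Fv d p) : ℝ)) a :=
      (((continuousAt_id.sub continuousAt_const).norm.pow 2)).mul
        ((contFv (fun h => hb h.symm)).inner (contFv (fun h => hd h.symm)))
    have h0 : ‖(a : EuclideanSpace ℝ (Fin 2)) - a‖ ^ 2 * (inner ℝ (Fv b a) (Fv d a) : ℝ) = 0 := by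
      simp
    have := hc.tendsto
    rw [h0] at this
    exact this.mono_left nhdsWithin_le_nhds

lemma tendsto_Gpair (a b c d e : EuclideanSpace ℝ (Fin 2)) :
    Filter.Tendsto
      (fun p => ‖p - a‖ ^ 2 * (inner ℝ (Fv b p - Fv c p) (Fv d p - Fv e p) : ℝ)) (𝓝[≠] a)
      (𝓝 (dlt a b * dlt a d - dlt a b * dlt a e - dlt a c * dlt a d + dlt a c * dlt a e)) := by
  have h := (((tendsto_base a b d).sub (tendsto_base a b e)).sub (tendsto_base a c d)).add
    (tendsto_base a c e)
  apply h.congr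
  intro p
  simp only [inner_sub_left, inner_sub_right]
  ring

lemma G_eq {N : ℕ} (x : Fin (N + 1) → EuclideanSpace ℝ (Fin 2)) (n : Fin N)
    (p : EuclideanSpace ℝ (Fin 2)) : G x n p = Fv (x n.succ) p - Fv (x 0) p := rfl

lemma tendsto_total {N : ℕ} (x : Fin (N + 1) → EuclideanSpace ℝ (Fin 2))
    (α : Fin N → Fin N → ℝ) (a : EuclideanSpace ℝ (Fin 2)) :
    Filter.Tendsto
      (fun p => ‖p - a‖ ^ 2 * ∑ j : Fin N, ∑ i ∈ Finset.univ.filter (fun i : Fin N => i ≤ j),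
        α i j * (inner ℝ (G x i p) (G x j p) : ℝ)) (𝓝[≠] a)
      (𝓝 (∑ j : Fin N, ∑ i ∈ Finset.univ.filter (fun i : Fin N => i ≤ j), α i j *
        (dlt a (x i.succ) * dlt a (x j.succ) - dlt a (x i.succ) * dlt a (x 0)
          - dlt a (x 0) * dlt a (x j.succ) + dlt a (x 0) * dlt a (x 0)))) := by
  have hre : ∀ p : EuclideanSpace ℝ (Fin 2),
      (∑ j : Fin N, ∑ i ∈ Finset.univ.filter (fun i : Fin N => i ≤ j),
        α i j * (‖p - a‖ ^ 2 * (inner ℝ (G x i p) (G x j p) : ℝ))) =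
      ‖p - a‖ ^ 2 * ∑ j : Fin N, ∑ i ∈ Finset.univ.filter (fun i : Fin N => i ≤ j),
        α i j * (inner ℝ (G x i p) (G x j p) : ℝ) := by
    intro p
    rw [Finset.mul_sum]
    refine Finset.sum_congr rfl fun j _ => ?_
    rw [Finset.mul_sum]
    exact Finset.sum_congr rfl fun i _ => by ring
  refine Filter.Tendsto.congr hre ?_
  refine tendsto_finset_sum _ fun j _ => tendsto_finset_sum _ fun i _ => ?_
  have := (tendsto_Gpair a (x i.succ) (x 0) (x j.succ) (x 0)).const_mul (α i j)
  refine this.congr fun p => ?_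
  rw [G_eq, G_eq]

/-- First two steps of the proof of Proposition 4.1: if
`Σ_{1 ≤ i ≤ j ≤ N} α_{ij} ⟨G_i(x), G_j(x)⟩ = 0` on all of `ℝ² ∖ E`, then all diagonal
coefficients `α_{jj}` vanish and the off-diagonal coefficients sum to zero. -/
theorem diagonal_coefficients_vanish
    (N : ℕ) (hN : 1 ≤ N)
    (x : Fin (N + 1) → EuclideanSpace ℝ (Fin 2))
    (hx : Function.Injective x)
    (α : Fin N → Fin N → ℝ)
    (hα : ∀ p ∉ Set.range x,
      ∑ j : Fin N, ∑ i ∈ Finset.univ.filter (fun i : Fin N => i ≤ j),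
        α i j * (inner ℝ (G x i p) (G x j p) : ℝ) = 0) :
    (∀ j : Fin N, α j j = 0) ∧
    ∑ j : Fin N, ∑ i ∈ Finset.univ.filter (fun i : Fin N => i < j), α i j = 0 := by
  have hdense : Dense (Set.range x)ᶜ := (Set.finite_range x).countable.dense_compl ℝ
  have hNB : ∀ a : EuclideanSpace ℝ (Fin 2), ((𝓝[(Set.range x)ᶜ] a)).NeBot :=
    fun a => mem_closure_iff_nhdsWithin_neBot.mp (hdense a)
  have hmono : ∀ a ∈ Set.range x,
      𝓝[(Set.range x)ᶜ] a ≤ 𝓝[≠] a := by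
    intro a ha
    exact nhdsWithin_mono a (Set.compl_subset_compl.mpr (Set.singleton_subset_iff.mpr ha))
  have hzero : ∀ a : EuclideanSpace ℝ (Fin 2),
      Filter.Tendsto (fun p => ‖p - a‖ ^ 2 * ∑ j : Fin N,
          ∑ i ∈ Finset.univ.filter (fun i : Fin N => i ≤ j),
        α i j * (inner ℝ (G x i p) (G x j p) : ℝ)) (𝓝[(Set.range x)ᶜ] a) (𝓝 0) := by
    intro a
    apply Filter.Tendsto.congr' _ (tendsto_const_nhds : Filter.Tendsto _ _ (𝓝 (0:ℝ)))
    filter_upwards [self_mem_nhdsWithin] with p hp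
    rw [hα p hp, mul_zero]
  have key : ∀ a ∈ Set.range x,
      (∑ j : Fin N, ∑ i ∈ Finset.univ.filter (fun i : Fin N => i ≤ j), α i j *
        (dlt a (x i.succ) * dlt a (x j.succ) - dlt a (x i.succ) * dlt a (x 0)
          - dlt a (x 0) * dlt a (x j.succ) + dlt a (x 0) * dlt a (x 0))) = 0 := by
    intro a ha
    haveI := hNB a
    exact tendsto_nhds_unique ((tendsto_total x α a).mono_left (hmono a ha)) (hzero a)
  have hdiag : ∀ j : Fin N, α j j = 0 := by
    intro j
    have h := key (x j.succ) ⟨j.succ, rfl⟩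
    have hiff : ∀ i : Fin N, dlt (x j.succ) (x i.succ) = if i = j then (1:ℝ) else 0 := by
      intro i
      simp only [dlt, hx.eq_iff, Fin.succ_inj]
    have h0 : dlt (x j.succ) (x 0) = 0 := by
      have : ¬ (x 0 = x j.succ) := fun h => (Fin.succ_ne_zero j) (hx h).symm
      simp [dlt, this]
    simp only [hiff, h0, mul_zero, zero_mul, sub_zero, add_zero] at h
    rw [Finset.sum_eq_single j] at h
    · rw [Finset.sum_eq_single j] at h
      · simpa using h
      · intro i _ hij; simp [hij]
      · intro hj; exact absurd (by simp : j ∈ Finset.univ.filter (fun i : Fin N => i ≤ j)) hj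
    · intro j' _ hj'; simp [hj']
    · intro hj; exact absurd (Finset.mem_univ j) hj
  refine ⟨hdiag, ?_⟩
  have h := key (x 0) ⟨0, rfl⟩
  have hiff : ∀ i : Fin N, dlt (x 0) (x i.succ) = 0 := by
    intro i
    have : ¬ (x i.succ = x 0) := fun h => (Fin.succ_ne_zero i) (hx h)
    simp [dlt, this]
  have h00 : dlt (x 0) (x 0) = 1 := by simp [dlt]
  simp only [hiff, h00, mul_zero, zero_mul, mul_one, sub_zero, zero_sub, zero_add, neg_zero] at h
  have hsum : ∑ j : Fin N, ∑ i ∈ Finset.univ.filter (fun i : Fin N => i ≤ j), α i j = 0 := by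
    simpa using h
  have hsplit : ∀ j : Fin N,
      (∑ i ∈ Finset.univ.filter (fun i : Fin N => i ≤ j), α i j) =
      (∑ i ∈ Finset.univ.filter (fun i : Fin N => i < j), α i j) + α j j := by
    intro j
    have hins : Finset.univ.filter (fun i : Fin N => i ≤ j) =
        insert j (Finset.univ.filter (fun i : Fin N => i < j)) := by
      ext i
      simp [le_iff_lt_or_eq, or_comm]
    rw [hins, Finset.sum_insert (by simp)]
    ring
  calc ∑ j : Fin N, ∑ i ∈ Finset.univ.filter (fun i : Fin N => i < j), α i j
      = ∑ j : Fin N, ∑ i ∈ Finset.univ.filter (fun i : Fin N => i ≤ j), α i j := by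
        refine Finset.sum_congr rfl fun j _ => ?_
        rw [hsplit j, hdiag j, add_zero]
    _ = 0 := hsum
end

section
/- Let p ∈ ℝ², let U ⊆ ℝ² be an open neighborhood of p, and let g, h : ℝ² → ℝ be real-analytic at every point of U. If h(x) = log‖x − p‖ · g(x) for every x ∈ U ∖ {p}, then g vanishes on some neighborhood of p. (This is the step in the proof of Proposition 4.1 of the paper asserting that, since v_N has a logarithmic singularity at x_N, the product v_N · g can be analytic about x_N only if g vanishes in a neighborhood of x_N.) -/
open Filter Topology Real

private lemma lineAnalyticAt {E : Type*} [NormedAddCommGroup E] [NormedSpace ℝ E]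
    {f : E → ℝ} (p ω : E) (t : ℝ) (hf : AnalyticAt ℝ f (p + t • ω)) :
    AnalyticAt ℝ (fun s : ℝ => f (p + s • ω)) t := by
  have hL : AnalyticAt ℝ (fun s : ℝ => p + s • ω) t := by
    have := (ContinuousLinearMap.toSpanSingleton ℝ ω).analyticAt t
    exact analyticAt_const.add this
  exact AnalyticAt.comp (f := fun s : ℝ => p + s • ω) hf hL

/-- Logarithmic-singularity step in the proof of Proposition 4.1: if `g` and `h` are
real-analytic on an open neighborhood `U` of `p` and `h(x) = log‖x − p‖ · g(x)` on
`U ∖ {p}`, then `g` vanishes on some neighborhood of `p`. -/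
theorem vanishes_near_of_log_singularity
    (p : EuclideanSpace ℝ (Fin 2))
    (U : Set (EuclideanSpace ℝ (Fin 2))) (hU : IsOpen U) (hpU : p ∈ U)
    (g h : EuclideanSpace ℝ (Fin 2) → ℝ)
    (hg : AnalyticOnNhd ℝ g U) (hh : AnalyticOnNhd ℝ h U)
    (heq : ∀ x ∈ U, x ≠ p → h x = Real.log ‖x - p‖ * g x) :
    ∀ᶠ x in nhds p, g x = 0 := by
  by_contra hcon
  rw [Filter.not_eventually] at hcon
  obtain ⟨r, hr0, hrU⟩ := Metric.isOpen_iff.mp hU p hpU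
  -- pick a unit direction ω such that g is not eventually zero along the line p + t·ω
  obtain ⟨ω, hω, hGne⟩ :
      ∃ ω : EuclideanSpace ℝ (Fin 2), ‖ω‖ = 1 ∧
        ¬ (∀ᶠ t in 𝓝 (0:ℝ), g (p + t • ω) = 0) := by
    by_cases hgp : g p = 0
    · obtain ⟨q, hq1, hq2⟩ := (hcon.and_eventually (Metric.ball_mem_nhds p hr0)).exists
      have hqp : q - p ≠ 0 := by
        intro hq; apply hq1; rw [sub_eq_zero] at hq; rw [hq]; exact hgp
      have hnorm : (0:ℝ) < ‖q - p‖ := norm_pos_iff.mpr hqp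
      set ω : EuclideanSpace ℝ (Fin 2) := ‖q - p‖⁻¹ • (q - p) with hωdef
      have hωn : ‖ω‖ = 1 := by
        rw [hωdef, norm_smul, norm_inv, norm_norm, inv_mul_cancel₀ hnorm.ne']
      refine ⟨ω, hωn, fun hev => ?_⟩
      have hGanal : AnalyticOnNhd ℝ (fun t : ℝ => g (p + t • ω)) (Set.Ioo (-r) r) := by
        intro t ht
        refine lineAnalyticAt p ω t (hg _ (hrU ?_))
        rw [Metric.mem_ball, dist_eq_norm, add_sub_cancel_left, norm_smul, hωn, mul_one,
          Real.norm_eq_abs, abs_lt]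
        exact ⟨ht.1, ht.2⟩
      have hzero := hGanal.eqOn_zero_of_preconnected_of_eventuallyEq_zero
        (isPreconnected_Ioo)
        (show (0:ℝ) ∈ Set.Ioo (-r) r from ⟨by linarith, hr0⟩)
        (by filter_upwards [hev] with t ht using ht)
      have ht0 : ‖q - p‖ ∈ Set.Ioo (-r) r := by
        constructor
        · linarith
        · rw [← dist_eq_norm, ← Metric.mem_ball]; exact hq2
      have := hzero ht0
      simp only [Pi.zero_apply] at this
      apply hq1
      rw [hωdef, smul_smul, mul_inv_cancel₀ hnorm.ne', one_smul] at this
      rwa [add_sub_cancel] at this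
    · refine ⟨EuclideanSpace.single 0 1, by simp, fun hev => hgp ?_⟩
      have := hev.self_of_nhds
      simpa using this
  set G : ℝ → ℝ := fun t => g (p + t • ω) with hGdef
  set H : ℝ → ℝ := fun t => h (p + t • ω) with hHdef
  have hωne : ω ≠ 0 := by intro h0; rw [h0, norm_zero] at hω; norm_num at hω
  have hmem : ∀ t : ℝ, |t| < r → p + t • ω ∈ U := by
    intro t ht
    apply hrU
    rw [Metric.mem_ball, dist_eq_norm, add_sub_cancel_left, norm_smul, hω, mul_one,
      Real.norm_eq_abs]
    exact ht
  have hGa : AnalyticAt ℝ G 0 := lineAnalyticAt p ω 0 (by simpa using hg p hpU)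
  have hHa : AnalyticAt ℝ H 0 := lineAnalyticAt p ω 0 (by simpa using hh p hpU)
  -- the order of G at 0 is finite
  have horderG : analyticOrderAt G 0 ≠ ⊤ := fun htop => hGne (analyticOrderAt_eq_top.mp htop)
  obtain ⟨n, hn⟩ : ∃ n : ℕ, analyticOrderAt G 0 = n := ⟨(analyticOrderAt G 0).toNat, (ENat.coe_toNat horderG).symm⟩
  obtain ⟨φ, hφa, hφ0, hφeq⟩ := (hGa.analyticOrderAt_eq_natCast (n := n)).mp hn
  have hφne : ∀ᶠ t in 𝓝 (0:ℝ), φ t ≠ 0 := hφa.continuousAt.eventually_ne hφ0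
  -- the key eventual identity on 𝓝[>] 0
  have hIoo : Set.Ioo (0:ℝ) (min r 1) ∈ 𝓝[>] (0:ℝ) :=
    Ioo_mem_nhdsGT_of_mem ⟨le_refl 0, lt_min hr0 one_pos⟩
  have hkey : ∀ᶠ t in 𝓝[>] (0:ℝ), H t = Real.log t * (t ^ n * φ t) := by
    filter_upwards [eventually_mem_nhdsWithin.filter_mono (nhdsWithin_mono _ (le_refl _)),
      mem_of_superset hIoo fun x hx => hx, (hφeq.filter_mono nhdsWithin_le_nhds)]
      with t _ ht hφt
    have ht0 : 0 < t := ht.1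
    have htr : |t| < r := by rw [abs_of_pos ht0]; exact lt_of_lt_of_le ht.2 (min_le_left _ _)
    have hxU : p + t • ω ∈ U := hmem t htr
    have hxp : p + t • ω ≠ p := by
      intro hx
      have : t • ω = 0 := by
        have := congrArg (fun z => z - p) hx
        simpa using this
      rcases smul_eq_zero.mp this with h1 | h1
      · exact ht0.ne' h1
      · exact hωne h1
    have hval := heq _ hxU hxp
    simp only [add_sub_cancel_left, norm_smul, hω, mul_one, Real.norm_eq_abs,
      abs_of_pos ht0] at hval
    show h (p + t • ω) = Real.log t * (t ^ n * φ t)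
    rw [hval]
    congr 1
    simpa [sub_zero] using hφt
  have hψpos : ∀ᶠ t in 𝓝[>] (0:ℝ), Real.log t ≠ 0 ∧ 0 < t ∧ t ^ n ≠ 0 ∧ φ t ≠ 0 := by
    filter_upwards [mem_of_superset hIoo fun x hx => hx,
      hφne.filter_mono nhdsWithin_le_nhds] with t ht hφt
    have ht0 : 0 < t := ht.1
    have ht1 : t < 1 := lt_of_lt_of_le ht.2 (min_le_right _ _)
    exact ⟨(Real.log_neg ht0 ht1).ne, ht0, (pow_pos ht0 n).ne', hφt⟩
  by_cases hHzero : ∀ᶠ t in 𝓝 (0:ℝ), H t = 0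
  · -- then log t * t^n * φ t = 0 for small positive t: impossible
    obtain ⟨t, ht1, ht2, ht3⟩ :=
      ((hHzero.filter_mono nhdsWithin_le_nhds).and (hkey.and hψpos)).exists
    rw [ht1] at ht2
    exact ht3.1 (by
      rcases mul_eq_zero.mp ht2.symm with h1 | h1
      · exact h1
      · exact absurd h1 (mul_ne_zero ht3.2.2.1 ht3.2.2.2))
  · have horderH : analyticOrderAt H 0 ≠ ⊤ := fun htop => hHzero (analyticOrderAt_eq_top.mp htop)
    obtain ⟨m, hm⟩ : ∃ m : ℕ, analyticOrderAt H 0 = m := ⟨(analyticOrderAt H 0).toNat, (ENat.coe_toNat horderH).symm⟩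
    obtain ⟨ψ, hψa, hψ0, hψeq⟩ := (hHa.analyticOrderAt_eq_natCast (n := m)).mp hm
    have hψeq' : ∀ᶠ t in 𝓝[>] (0:ℝ), H t = t ^ m * ψ t := by
      filter_upwards [hψeq.filter_mono nhdsWithin_le_nhds] with t ht
      simpa [sub_zero] using ht
    have hmain : ∀ᶠ t in 𝓝[>] (0:ℝ), t ^ m * ψ t = Real.log t * (t ^ n * φ t) := by
      filter_upwards [hkey, hψeq'] with t h1 h2
      rw [← h2, h1]
    rcases le_or_gt n m with hnm | hmn
    · -- n ≤ m : log t * φ t = t^(m-n) * ψ t has a finite limit, contradiction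
      have hred : ∀ᶠ t in 𝓝[>] (0:ℝ), t ^ (m - n) * ψ t = Real.log t * φ t := by
        filter_upwards [hmain, hψpos] with t h1 h2
        apply mul_left_cancel₀ h2.2.2.1
        calc t ^ n * (t ^ (m - n) * ψ t) = t ^ m * ψ t := by
              rw [← mul_assoc, ← pow_add, Nat.add_sub_cancel' hnm]
          _ = Real.log t * (t ^ n * φ t) := h1
          _ = t ^ n * (Real.log t * φ t) := by ring
      have hlim1 : Tendsto (fun t : ℝ => t ^ (m - n) * ψ t) (𝓝[>] 0)
          (𝓝 ((0:ℝ) ^ (m - n) * ψ 0)) :=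
        ((continuous_pow (m - n)).continuousAt.mul hψa.continuousAt).tendsto.mono_left
          nhdsWithin_le_nhds
      have hlim2 : Tendsto (fun t : ℝ => Real.log t * φ t) (𝓝[>] 0)
          (𝓝 ((0:ℝ) ^ (m - n) * ψ 0)) := hlim1.congr' hred
      have habs : Tendsto (fun t : ℝ => |Real.log t * φ t|) (𝓝[>] 0) atTop := by
        have h1 : Tendsto (fun t : ℝ => |Real.log t|) (𝓝[>] 0) atTop :=
          tendsto_abs_atBot_atTop.comp Real.tendsto_log_nhdsGT_zero
        have h2 : Tendsto (fun t : ℝ => |φ t|) (𝓝[>] 0) (𝓝 |φ 0|) :=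
          ((continuous_abs.continuousAt.comp hφa.continuousAt).tendsto).mono_left
            nhdsWithin_le_nhds
        have h3 := h1.atTop_mul_pos (abs_pos.mpr hφ0) h2
        exact h3.congr fun t => (abs_mul _ _).symm
      exact not_tendsto_nhds_of_tendsto_atTop habs _ hlim2.abs
    · -- m < n : ψ t = log t * t^(n-m) * φ t → 0, but ψ 0 ≠ 0
      have hred : ∀ᶠ t in 𝓝[>] (0:ℝ), Real.log t * t ^ (n - m) * φ t = ψ t := by
        filter_upwards [hmain, hψpos] with t h1 h2
        symm
        apply mul_left_cancel₀ (pow_ne_zero m h2.2.1.ne')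
        calc t ^ m * ψ t = Real.log t * (t ^ n * φ t) := h1
          _ = t ^ m * (Real.log t * t ^ (n - m) * φ t) := by
              have hn' : t ^ n = t ^ m * t ^ (n - m) := by
                rw [← pow_add, Nat.add_sub_cancel' hmn.le]
              rw [hn']; ring
      have hpow0 : (0:ℝ) < ((n - m : ℕ) : ℝ) := by
        have : 0 < n - m := Nat.sub_pos_of_lt hmn
        exact_mod_cast this
      have hlog : Tendsto (fun t : ℝ => Real.log t * t ^ (n - m)) (𝓝[>] 0) (𝓝 0) :=
        (tendsto_log_mul_rpow_nhdsGT_zero hpow0).congr fun x => by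
          rw [Real.rpow_natCast]
      have hlim1 : Tendsto (fun t : ℝ => Real.log t * t ^ (n - m) * φ t) (𝓝[>] 0)
          (𝓝 (0 * φ 0)) :=
        hlog.mul (hφa.continuousAt.tendsto.mono_left nhdsWithin_le_nhds)
      have hlim2 : Tendsto ψ (𝓝[>] 0) (𝓝 (0 * φ 0)) := hlim1.congr' hred
      have hlim3 : Tendsto ψ (𝓝[>] 0) (𝓝 (ψ 0)) :=
        hψa.continuousAt.tendsto.mono_left nhdsWithin_le_nhds
      have : ψ 0 = 0 * φ 0 := tendsto_nhds_unique hlim3 hlim2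
      rw [zero_mul] at this
      exact hψ0 this
end

section
/- Let U, V ⊆ ℂ be open, let Φ : ℂ → ℂ be complex-differentiable at every point of U with Φ(U) ⊆ V and Φ'(z) ≠ 0 for every z ∈ U, and let û_1, …, û_N : ℂ → ℝ be twice continuously differentiable and harmonic on V (Δû_n = 0 on V). Let Ω ⊆ U be nonempty and open. If the family of functions w ↦ ⟨∇û_i(w), ∇û_j(w)⟩, indexed by pairs (i, j) with 1 ≤ i ≤ j ≤ N, is linearly independent as functions on Φ(Ω), then the family z ↦ ⟨∇(û_i ∘ Φ)(z), ∇(û_j ∘ Φ)(z)⟩, 1 ≤ i ≤ j ≤ N, is linearly independent as functions on Ω. (This is the core of the proof of Proposition 4.2 of the paper: a conformal change of variables transfers the linear independence of the gradient products from the disk to a general two-dimensional domain.) -/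
open Finset

/-- The Laplacian of `f : ℂ → ℝ`, with `ℂ` regarded as the Euclidean plane via
`z = x + iy`: `Δf = ∂²f/∂x² + ∂²f/∂y²`. -/
noncomputable def lap (f : ℂ → ℝ) (z : ℂ) : ℝ :=
  fderiv ℝ (fun w => fderiv ℝ f w 1) z 1 +
    fderiv ℝ (fun w => fderiv ℝ f w Complex.I) z Complex.I


lemma fderiv_real_of_complex {Φ : ℂ → ℂ} {z : ℂ} (hΦ : DifferentiableAt ℂ Φ z) (y : ℂ) :
    fderiv ℝ Φ z y = deriv Φ z * y := by
  rw [hΦ.fderiv_restrictScalars ℝ]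
  simp only [ContinuousLinearMap.coe_restrictScalars']
  have : fderiv ℂ Φ z y = y • fderiv ℂ Φ z 1 := by
    rw [← map_smul]; simp
  rw [this, fderiv_apply_one_eq_deriv]
  simp [mul_comm]

lemma grad_comp (f : ℂ → ℝ) (Φ : ℂ → ℂ) (z : ℂ) (hf : DifferentiableAt ℝ f (Φ z))
    (hΦ : DifferentiableAt ℂ Φ z) :
    gradient (f ∘ Φ) z = (starRingEnd ℂ) (deriv Φ z) * gradient f (Φ z) := by
  apply ext_inner_right ℝ
  intro y
  have h1 : ∀ (g : ℂ → ℝ) (w v : ℂ), DifferentiableAt ℝ g w →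
      (inner ℝ (gradient g w) v : ℝ) = fderiv ℝ g w v := by
    intro g w v hg
    rw [gradient]
    rw [← InnerProductSpace.toDual_apply_apply, LinearIsometryEquiv.apply_symm_apply]
  have hcomp : DifferentiableAt ℝ (f ∘ Φ) z := hf.comp z (hΦ.restrictScalars ℝ)
  rw [h1 (f ∘ Φ) z y hcomp, fderiv_comp z hf (hΦ.restrictScalars ℝ)]
  simp only [ContinuousLinearMap.coe_comp', Function.comp_apply]
  rw [fderiv_real_of_complex hΦ y, ← h1 f (Φ z) _ hf]
  rw [Complex.inner, Complex.inner]
  ring_nf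
  rw [map_mul, Complex.conj_conj]
  ring_nf

lemma inner_conj_mul (c a b : ℂ) :
    (inner ℝ ((starRingEnd ℂ) c * a) ((starRingEnd ℂ) c * b) : ℝ)
      = Complex.normSq c * (inner ℝ a b : ℝ) := by
  rw [Complex.inner, Complex.inner, map_mul, Complex.conj_conj]
  have h : (starRingEnd ℂ) c * b * (c * (starRingEnd ℂ) a)
      = (Complex.normSq c : ℂ) * (b * (starRingEnd ℂ) a) := by
    rw [← Complex.mul_conj]
    ring
  rw [h, Complex.re_ofReal_mul]

/-- Core of the proof of Proposition 4.2: a conformal change of variables transfers the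
linear independence of the family of pointwise inner products of gradients of harmonic
functions from `Φ(Ω)` to `Ω`. Here `ℂ` carries its standard structure of a
two-dimensional real inner product space. -/
theorem linear_independence_transfer_conformal
    (U V : Set ℂ) (hU : IsOpen U) (hV : IsOpen V)
    (Φ : ℂ → ℂ) (hΦ : ∀ z ∈ U, DifferentiableAt ℂ Φ z) (hΦUV : Set.MapsTo Φ U V)
    (hΦ' : ∀ z ∈ U, deriv Φ z ≠ 0)
    (N : ℕ) (u : Fin N → ℂ → ℝ)
    (hu : ∀ n, ContDiffOn ℝ 2 (u n) V)
    (huh : ∀ n, ∀ w ∈ V, lap (u n) w = 0)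
    (Ω : Set ℂ) (hΩU : Ω ⊆ U) (hΩopen : IsOpen Ω) (hΩne : Ω.Nonempty)
    (hind : ∀ α : Fin N → Fin N → ℝ,
      (∀ w ∈ Φ '' Ω,
        ∑ j : Fin N, ∑ i ∈ Finset.univ.filter (fun i : Fin N => i ≤ j),
          α i j * (inner ℝ (gradient (u i) w) (gradient (u j) w) : ℝ) = 0) →
      ∀ i j : Fin N, i ≤ j → α i j = 0) :
    ∀ α : Fin N → Fin N → ℝ,
      (∀ z ∈ Ω,
        ∑ j : Fin N, ∑ i ∈ Finset.univ.filter (fun i : Fin N => i ≤ j),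
          α i j * (inner ℝ (gradient (u i ∘ Φ) z) (gradient (u j ∘ Φ) z) : ℝ) = 0) →
      ∀ i j : Fin N, i ≤ j → α i j = 0 := by
  intro α h
  apply hind α
  rintro w ⟨z, hz, rfl⟩
  have hzU := hΩU hz
  have hΦz : DifferentiableAt ℂ Φ z := hΦ z hzU
  have hmem : Φ z ∈ V := hΦUV hzU
  have hgrad : ∀ n : Fin N, gradient (u n ∘ Φ) z
      = (starRingEnd ℂ) (deriv Φ z) * gradient (u n) (Φ z) := fun n =>
    grad_comp _ _ _
      (((hu n).differentiableOn (by norm_num)).differentiableAt (hV.mem_nhds hmem)) hΦz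
  have hne : Complex.normSq (deriv Φ z) ≠ 0 :=
    fun h0 => hΦ' z hzU (Complex.normSq_eq_zero.mp h0)
  have h0' : Complex.normSq (deriv Φ z) *
      (∑ j : Fin N, ∑ i ∈ Finset.univ.filter (fun i : Fin N => i ≤ j),
        α i j * (inner ℝ (gradient (u i) (Φ z)) (gradient (u j) (Φ z)) : ℝ)) = 0 := by
    rw [← h z hz, Finset.mul_sum]
    refine Finset.sum_congr rfl fun j _ => ?_
    rw [Finset.mul_sum]
    refine Finset.sum_congr rfl fun i _ => ?_
    rw [hgrad i, hgrad j, inner_conj_mul]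
    ring
  exact (mul_eq_zero.mp h0').resolve_left hne
end
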